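/- arXiv:1912.12684 — 3 statements merged into one kernel-verified Lean document; each statement's English description precedes it below -/
import Mathlib

section
/- Suppose a_1, a_2, …, a_N are distinct symbols in an alphabet Σ, N ≥ 20 and M ≥ 2 are integers, and for j = 1, …, M define the Feldman pattern B_j = (a_1^{N^{2j}} a_2^{N^{2j}} ⋯ a_N^{N^{2j}})^{N^{2M−2j+2}} (a string of length N^{2M+3}). If B and B̄ are strings of consecutive symbols in B_j and B_k respectively, where j ≠ k, |B| ≥ N^{2M+2} and |B̄| ≥ N^{2M+2}, then f̄(B, B̄) > 1 − 4/√N and f̃(B, B̄) > 1 − 12/√N. -/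
open MeasureTheory

namespace Paper

variable {σ : Type*}

/-- The concatenation of `t` copies of the string `w`. -/
def rep (w : List σ) (t : ℕ) : List σ := (List.replicate t w).flatten

/-- `I` is a match between the strings `a` and `b` (with 0-based indices):
a collection of pairs of indices, strictly increasing in both coordinates,
pairing equal symbols. -/
def IsMatch (a b : List σ) (I : List (ℕ × ℕ)) : Prop :=
  I.Chain' (fun p q => p.1 < q.1 ∧ p.2 < q.2) ∧
  ∀ p ∈ I, p.1 < a.length ∧ p.2 < b.length ∧ a[p.1]? = b[p.2]?

/-- The largest cardinality of a match between `a` and `b`. -/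
noncomputable def maxMatch (a b : List σ) : ℕ :=
  sSup {r | ∃ I, IsMatch a b I ∧ I.length = r}

/-- The `f̄` distance between two strings. -/
noncomputable def fbar (a b : List σ) : ℝ :=
  1 - 2 * (maxMatch a b : ℝ) / (a.length + b.length)

/-- `I` is an approximate match between the strings `a` and `b` (0-based indices):
pairs of indices, nondecreasing in each coordinate and strictly increasing as pairs,
pairing equal symbols, such that the set of indices paired with any given index is
contained in a set of three consecutive indices. -/
def IsApproxMatch (a b : List σ) (I : List (ℕ × ℕ)) : Prop :=
  I.Chain' (fun p q => p.1 ≤ q.1 ∧ p.2 ≤ q.2 ∧ p ≠ q) ∧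
  (∀ p ∈ I, p.1 < a.length ∧ p.2 < b.length ∧ a[p.1]? = b[p.2]?) ∧
  (∀ p ∈ I, (∃ s, ∀ q ∈ I, q.1 = p.1 → q.2 ∈ ({s, s+1, s+2} : Set ℕ)) ∧
            (∃ t, ∀ q ∈ I, q.2 = p.2 → q.1 ∈ ({t, t+1, t+2} : Set ℕ)))

/-- The largest cardinality of an approximate match between `a` and `b`. -/
noncomputable def maxApproxMatch (a b : List σ) : ℕ :=
  sSup {r | ∃ I, IsApproxMatch a b I ∧ I.length = r}

/-- The approximate distance `f̃` between two strings. -/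
noncomputable def ftilde (a b : List σ) : ℝ :=
  max 0 (1 - 2 * (maxApproxMatch a b : ℝ) / (a.length + b.length))

end Paper

open Paper List

/-- The `j`-th Feldman pattern on the symbols `a 0, …, a (N−1)`:
`B_j = (a₁^{N^{2j}} a₂^{N^{2j}} ⋯ a_N^{N^{2j}})^{N^{2M−2j+2}}`. -/
def feldmanPattern {σ : Type*} (N : ℕ) (a : Fin N → σ) (j M : ℕ) : List σ :=
  Paper.rep ((List.ofFn fun i : Fin N => List.replicate (N ^ (2 * j)) (a i)).flatten)
    (N ^ (2 * (M - j) + 2))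


namespace S13

variable {σ : Type*}

lemma length_le_card {l : List ℕ} {s : Finset ℕ} (hnd : l.Nodup) (h : ∀ x ∈ l, x ∈ s) :
    l.length ≤ s.card := by
  rw [← List.toFinset_card_of_nodup hnd]
  exact Finset.card_le_card (fun x hx => h x (List.mem_toFinset.mp hx))

lemma length_le_mul_dedup {α : Type*} [DecidableEq α] {l : List α} {m : ℕ}
    (h : ∀ v ∈ l, l.count v ≤ m) : l.length ≤ m * l.dedup.length := by
  have h1 : l.length = ∑ v ∈ l.toFinset, l.count v := by
    have := Multiset.toFinset_sum_count_eq (l : Multiset α)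
    simpa using this.symm
  rw [h1, ← List.card_toFinset]
  calc ∑ v ∈ l.toFinset, l.count v ≤ ∑ _v ∈ l.toFinset, m :=
        Finset.sum_le_sum (fun v hv => h v (List.mem_toFinset.mp hv))
    _ = l.toFinset.card * m := by rw [Finset.sum_const, smul_eq_mul]
    _ = m * l.toFinset.card := Nat.mul_comm _ _

lemma progression_bound {N c : ℕ} (hN : 0 < N) : ∀ {l : List ℕ}, l ≠ [] →
    l.Pairwise (· < ·) → (∀ v ∈ l, v % N = c) → ∀ {lo hi : ℕ}, (∀ v ∈ l, lo ≤ v ∧ v ≤ hi) →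
    N * l.length + lo ≤ N + hi := by
  intro l
  induction l with
  | nil => intro h; exact absurd rfl h
  | cons x t ih =>
    intro _ hs hc lo hi hb
    rcases eq_or_ne t [] with rfl | htne
    · have := hb x (by simp)
      simp only [List.length_cons, List.length_nil]
      omega
    · have hxt : ∀ v ∈ t, x + N ≤ v := by
        intro v hv
        have hlt : x < v := (List.pairwise_cons.mp hs).1 v hv
        have h1 : v % N = x % N := by
          rw [hc v (by simp [hv]), hc x (by simp)]
        have : x / N < v / N := by
          rcases Nat.lt_or_ge (x / N) (v / N) with h | h
          · exact h
          · exfalso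
            have := Nat.div_add_mod x N
            have := Nat.div_add_mod v N
            have : v / N ≤ x / N := h
            nlinarith [Nat.div_add_mod x N, Nat.div_add_mod v N]
        nlinarith [Nat.div_add_mod x N, Nat.div_add_mod v N, Nat.mod_lt x hN]
      have ih' := ih htne (List.pairwise_cons.mp hs).2
        (fun v hv => hc v (by simp [hv]))
        (lo := x + N) (hi := hi)
        (fun v hv => ⟨hxt v hv, (hb v (by simp [hv])).2⟩)
      have hlox : lo ≤ x := (hb x (by simp)).1
      simp only [List.length_cons]
      have hmul : N * (t.length + 1) = N * t.length + N := by ring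
      omega


lemma group_span_bound {N d c : ℕ} (hN : 0 < N) (hd : 0 < d) {l : List ℕ}
    (hne : l ≠ []) (hs : l.Pairwise (· < ·)) (hc : ∀ v ∈ l, (v / d) % N = c)
    {lo hi : ℕ} (hb : ∀ v ∈ l, lo ≤ v ∧ v ≤ hi) :
    N * l.length + lo ≤ N * d + d + hi := by
  set u : List ℕ := (l.map (· / d)).dedup with hu
  have hlnd : l.Nodup := hs.nodup
  -- multiplicity of each value of v/d is at most d
  have hcnt : ∀ v ∈ l.map (· / d), (l.map (· / d)).count v ≤ d := by
    intro v _
    have h1 : (l.map (· / d)).count v = (l.filter (fun x => x / d == v)).length := by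
      rw [List.count, List.countP_map, List.countP_eq_length_filter]
      rfl
    rw [h1]
    have hcard : (Finset.Ico (v * d) (v * d + d)).card = d := by simp
    rw [← hcard]
    apply length_le_card (hlnd.filter _)
    intro x hx
    have hxd : x / d = v := by simpa using (List.of_mem_filter hx)
    have h2 := Nat.div_add_mod x d
    rw [hxd] at h2
    have h3 := Nat.mod_lt x hd
    simp only [Finset.mem_Ico, Nat.mul_comm v d]
    omega
  have hlen : l.length ≤ d * u.length := by
    have := length_le_mul_dedup (l := l.map (· / d)) (m := d) hcnt
    simpa using this
  -- u is sorted strictly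
  have hms : (l.map (· / d)).Pairwise (· ≤ ·) :=
    List.Pairwise.map _ (fun {a b} hab => Nat.div_le_div_right (le_of_lt hab)) hs
  have hus : u.Pairwise (· < ·) := by
    have h1 : u.Pairwise (· ≤ ·) := hms.sublist (List.dedup_sublist _)
    have h2 : u.Nodup := List.nodup_dedup _
    exact (h1.and h2).imp (fun h => lt_of_le_of_ne h.1 h.2)
  have humem : ∀ x ∈ u, (x % N = c) ∧ lo / d ≤ x ∧ x ≤ hi / d := by
    intro x hx
    obtain ⟨v, hv, rfl⟩ := List.mem_map.mp (List.mem_dedup.mp hx)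
    exact ⟨hc v hv, Nat.div_le_div_right (hb v hv).1, Nat.div_le_div_right (hb v hv).2⟩
  have hune : u ≠ [] := by
    simp [hu, List.dedup_eq_nil, hne]
  have hprog := progression_bound (c := c) hN hune hus (fun x hx => (humem x hx).1)
    (lo := lo / d) (hi := hi / d) (fun x hx => (humem x hx).2)
  -- assemble
  have e1 : N * l.length ≤ d * (N * u.length) := by
    calc N * l.length ≤ N * (d * u.length) := Nat.mul_le_mul_left _ hlen
      _ = d * (N * u.length) := by ring
  have e2 : d * (N * u.length + lo / d) ≤ d * (N + hi / d) := Nat.mul_le_mul_left _ hprog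
  have e3 : d * (hi / d) ≤ hi := Nat.mul_div_le hi d
  have e4 : lo < d * (lo / d) + d := by
    have := Nat.div_add_mod lo d
    have := Nat.mod_lt lo hd
    omega
  have e5 : d * (N * u.length + lo / d) = d * (N * u.length) + d * (lo / d) := by ring
  have e6 : d * (N + hi / d) = d * N + d * (hi / d) := by ring
  have e7 : d * N = N * d := by ring
  omega


/-- The weak ordering relation on index pairs. -/
def Rle (p q : ℕ × ℕ) : Prop := p.1 ≤ q.1 ∧ p.2 ≤ q.2 ∧ p ≠ q

lemma Rle_trans : Transitive Rle := by
  rintro p q r ⟨h1, h2, h3⟩ ⟨h4, h5, h6⟩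
  refine ⟨h1.trans h4, h2.trans h5, ?_⟩
  rintro rfl
  exact h3 (Prod.ext (le_antisymm h1 h4) (le_antisymm h2 h5))

lemma count_fst_le_three {I : List (ℕ × ℕ)} (hPW : I.Pairwise Rle)
    (hwin : ∀ p ∈ I, ∃ s, ∀ q ∈ I, q.1 = p.1 → q.2 ∈ ({s, s + 1, s + 2} : Set ℕ))
    (v : ℕ) : (I.map Prod.fst).count v ≤ 3 := by
  have h1 : (I.map Prod.fst).count v = (I.filter (fun p => p.1 == v)).length := by
    rw [List.count, List.countP_map, List.countP_eq_length_filter]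
    rfl
  rw [h1]
  set F := I.filter (fun p => p.1 == v) with hF
  rcases eq_or_ne F [] with hFe | hFe
  · simp [hFe]
  · obtain ⟨p, hp⟩ := List.exists_mem_of_ne_nil F hFe
    have hpI : p ∈ I := List.mem_of_mem_filter hp
    have hpv : p.1 = v := by simpa using List.of_mem_filter hp
    obtain ⟨s, hs⟩ := (hwin p hpI).imp (fun s h => h)
    have hFPW : F.Pairwise Rle := hPW.filter _
    have hFlt : F.Pairwise (fun p q => p.2 < q.2) := by
      apply List.Pairwise.imp_of_mem _ hFPW
      intro x y hx hy hxy
      have hxv : x.1 = v := by simpa using List.of_mem_filter hx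
      have hyv : y.1 = v := by simpa using List.of_mem_filter hy
      rcases Nat.lt_or_ge x.2 y.2 with h | h
      · exact h
      · exfalso
        exact hxy.2.2 (Prod.ext (hxv.trans hyv.symm) (le_antisymm hxy.2.1 h))
    have hnd : (F.map Prod.snd).Nodup := by
      have : (F.map Prod.snd).Pairwise (· < ·) := List.Pairwise.map _ (fun _ _ h => h) hFlt
      exact this.imp (fun h => Nat.ne_of_lt h)
    have hmem : ∀ x ∈ F.map Prod.snd, x ∈ ({s, s + 1, s + 2} : Finset ℕ) := by
      intro x hx
      obtain ⟨q, hq, rfl⟩ := List.mem_map.mp hx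
      have hqI : q ∈ I := List.mem_of_mem_filter hq
      have hqv : q.1 = v := by simpa using List.of_mem_filter hq
      have := hs q hqI (hqv.trans hpv.symm)
      simpa using this
    have hcard : ({s, s + 1, s + 2} : Finset ℕ).card ≤ 3 := by
      apply (Finset.card_insert_le _ _).trans
      apply Nat.succ_le_succ
      apply (Finset.card_insert_le _ _).trans
      simp
    calc F.length = (F.map Prod.snd).length := (List.length_map _).symm
      _ ≤ ({s, s + 1, s + 2} : Finset ℕ).card := length_le_card hnd hmem
      _ ≤ 3 := hcard

lemma group_bound {N d o c b0 b1 : ℕ} (hN : 0 < N) (hd : 0 < d) {G : List (ℕ × ℕ)}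
    (hne : G ≠ []) (hPW : G.Pairwise Rle)
    (hsym : ∀ p ∈ G, ((o + p.1) / d) % N = c)
    (hcnt : ∀ v, (G.map Prod.fst).count v ≤ 3)
    (hb0 : ∀ p ∈ G, b0 ≤ p.1) (hb1 : ∀ p ∈ G, p.1 ≤ b1) :
    N * G.length + 3 * b0 ≤ 3 * b1 + 6 * N * d := by
  set l := G.map Prod.fst with hl
  set dl := l.dedup with hdl
  have hlen : G.length ≤ 3 * dl.length := by
    have h := length_le_mul_dedup (l := l) (m := 3) (fun v _ => hcnt v)
    calc G.length = l.length := (List.length_map _).symm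
      _ ≤ 3 * dl.length := h
  -- dl is sorted strictly
  have hls : l.Pairwise (· ≤ ·) := List.Pairwise.map _ (fun _ _ h => h.1) hPW
  have hdls : dl.Pairwise (· < ·) := by
    have h1 : dl.Pairwise (· ≤ ·) := hls.sublist (List.dedup_sublist _)
    exact (h1.and (List.nodup_dedup _)).imp (fun h => lt_of_le_of_ne h.1 h.2)
  have hdmem : ∀ x ∈ dl, ((o + x) / d) % N = c ∧ b0 ≤ x ∧ x ≤ b1 := by
    intro x hx
    obtain ⟨p, hp, rfl⟩ := List.mem_map.mp (List.mem_dedup.mp hx)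
    exact ⟨hsym p hp, hb0 p hp, hb1 p hp⟩
  have hdne : dl ≠ [] := by
    simp [hdl, List.dedup_eq_nil, hl, hne]
  -- shifted list
  set w := dl.map (o + ·) with hw
  have hwne : w ≠ [] := by simp [hw, hdne]
  have hws : w.Pairwise (· < ·) :=
    List.Pairwise.map _ (fun _ _ h => Nat.add_lt_add_left h o) hdls
  have hwc : ∀ x ∈ w, (x / d) % N = c := by
    intro x hx
    obtain ⟨y, hy, rfl⟩ := List.mem_map.mp hx
    exact (hdmem y hy).1
  have hwb : ∀ x ∈ w, o + b0 ≤ x ∧ x ≤ o + b1 := by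
    intro x hx
    obtain ⟨y, hy, rfl⟩ := List.mem_map.mp hx
    exact ⟨Nat.add_le_add_left (hdmem y hy).2.1 o, Nat.add_le_add_left (hdmem y hy).2.2 o⟩
  have hspan := group_span_bound hN hd hwne hws hwc hwb
  have hwl : w.length = dl.length := List.length_map _
  rw [hwl] at hspan
  -- hspan : N * dl.length + (o + b0) ≤ N * d + d + (o + b1)
  have e1 : N * G.length ≤ 3 * (N * dl.length) := by
    calc N * G.length ≤ N * (3 * dl.length) := Nat.mul_le_mul_left _ hlen
      _ = 3 * (N * dl.length) := by ring
  have e2 : 3 * (N * dl.length) + 3 * b0 ≤ 3 * (N * d) + 3 * d + 3 * b1 := by omega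
  have e3 : 3 * d ≤ 3 * (N * d) := by nlinarith
  have e4 : 6 * N * d = 3 * (N * d) + 3 * (N * d) := by ring
  omega


lemma count_bound {N d D o o' lenB tmax : ℕ} (hN : 0 < N) (hd : 0 < d) :
    ∀ (n : ℕ) (I : List (ℕ × ℕ)), I.length ≤ n →
    I.Pairwise Rle →
    (∀ p ∈ I, ((o + p.1) / d) % N = ((o' + p.2) / D) % N) →
    (∀ p ∈ I, p.1 < lenB) →
    (∀ p ∈ I, ∃ s, ∀ q ∈ I, q.1 = p.1 → q.2 ∈ ({s, s + 1, s + 2} : Set ℕ)) →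
    (∀ p ∈ I, (o' + p.2) / D ≤ tmax) →
    ∀ b0 t0, b0 ≤ lenB → t0 ≤ tmax + 1 →
    (∀ p ∈ I, b0 ≤ p.1) → (∀ p ∈ I, t0 ≤ (o' + p.2) / D) →
    N * I.length + 3 * b0 + 6 * N * d * t0 ≤ 3 * lenB + 6 * N * d * (tmax + 1) := by
  intro n
  induction n with
  | zero =>
    intro I hlen _ _ _ _ _ b0 t0 hb0 ht0 _ _
    have : I = [] := List.length_eq_zero_iff.mp (Nat.le_zero.mp hlen)
    subst this
    have h1 : 6 * N * d * t0 ≤ 6 * N * d * (tmax + 1) := Nat.mul_le_mul_left _ ht0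
    simp only [List.length_nil]
    omega
  | succ n ih =>
    intro I hlen hPW hsym hlt hwin htmax b0 t0 hb0 ht0 hib0 hit0
    rcases I with _ | ⟨h, tl⟩
    · have h1 : 6 * N * d * t0 ≤ 6 * N * d * (tmax + 1) := Nat.mul_le_mul_left _ ht0
      simp only [List.length_nil]
      omega
    set I := h :: tl with hI
    set th := (o' + h.2) / D with hth
    set pred : ℕ × ℕ → Bool := fun p => (o' + p.2) / D == th with hpred
    set G := I.takeWhile pred with hG
    set I' := I.dropWhile pred with hI'
    have hGI : G ++ I' = I := List.takeWhile_append_dropWhile ..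
    have hGmem : ∀ p ∈ G, p ∈ I := fun p hp => (List.takeWhile_sublist _).mem hp
    have hI'mem : ∀ p ∈ I', p ∈ I := fun p hp => (List.dropWhile_sublist _).mem hp
    have hGth : ∀ p ∈ G, (o' + p.2) / D = th := by
      intro p hp
      have := List.mem_takeWhile_imp hp
      simpa [hpred] using this
    have hGne : G ≠ [] := by
      have : pred h = true := by simp [hpred, hth]
      simp [hG, hI, List.takeWhile_cons, this]
    -- pairwise decomposition
    have hPW' : (G ++ I').Pairwise Rle := by rw [hGI]; exact hPW
    rw [List.pairwise_append] at hPW'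
    obtain ⟨hPWG, hPWI', hcross⟩ := hPW'
    -- counts
    have hcntG : ∀ v, (G.map Prod.fst).count v ≤ 3 := by
      intro v
      have h1 : (G.map Prod.fst).Sublist (I.map Prod.fst) :=
        (List.takeWhile_sublist _).map _
      exact (h1.count_le v).trans (count_fst_le_three hPW hwin v)
    have hsymG : ∀ p ∈ G, ((o + p.1) / d) % N = th % N := by
      intro p hp
      rw [hsym p (hGmem p hp), hGth p hp]
    have hthmax : th ≤ tmax := htmax h (by simp [hI])
    have ht0th : t0 ≤ th := hit0 h (by simp [hI])
    rcases I' with _ | ⟨h', tl'⟩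
    · -- single group
      have hIG : I = G := by rw [← hGI]; simp
      have hgb := group_bound (b1 := lenB) hN hd hGne hPWG hsymG hcntG
        (fun p hp => hib0 p (hGmem p hp)) (fun p hp => le_of_lt (hlt p (hGmem p hp)))
      rw [← hIG] at hgb
      have h1 : 6 * N * d * t0 ≤ 6 * N * d * th := Nat.mul_le_mul_left _ ht0th
      have h2 : 6 * N * d * th ≤ 6 * N * d * tmax := Nat.mul_le_mul_left _ hthmax
      have h3 : 6 * N * d * (tmax + 1) = 6 * N * d * tmax + 6 * N * d := by ring
      omega
    · -- at least two groups
      set b1 := h'.1 with hb1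
      have hh'I' : h' ∈ h' :: tl' := by simp
      have hGb1 : ∀ p ∈ G, p.1 ≤ b1 := fun p hp => (hcross p hp h' hh'I').1
      have hgb := group_bound (b1 := b1) hN hd hGne hPWG hsymG hcntG
        (fun p hp => hib0 p (hGmem p hp)) hGb1
      -- h' has a strictly larger block index
      have hdwne : I.dropWhile pred ≠ [] := by rw [← hI']; simp
      have hh'pred : pred h' = false := by
        have h0 := List.head_dropWhile_not pred hdwne
        have h4 : (I.dropWhile pred).head? = some h' := by rw [← hI']; rfl
        rw [List.head?_eq_head hdwne] at h4
        rwa [Option.some.inj h4] at h0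
      have hh'th : (o' + h'.2) / D ≠ th := by simpa [hpred] using hh'pred
      have hh'ge : th ≤ (o' + h'.2) / D := by
        have hmem : h' ∈ I := hI'mem h' hh'I'
        rcases List.mem_cons.mp hmem with heq | hmemtl
        · rw [heq]
        · have hR : Rle h h' := (List.pairwise_cons.mp hPW).1 h' hmemtl
          exact Nat.div_le_div_right (Nat.add_le_add_left hR.2.1 o')
      have hth1 : th + 1 ≤ (o' + h'.2) / D := by omega
      -- hypotheses for I' and the IH
      have hlenI' : (h' :: tl').length ≤ n := by
        have h1 : G.length + (h' :: tl').length = I.length := by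
          rw [← hGI]; simp
        have h2 : 1 ≤ G.length := List.length_pos_iff.mpr hGne
        have h3 : I.length = tl.length + 1 := by simp [hI]
        omega
      have hI'b1 : ∀ q ∈ h' :: tl', b1 ≤ q.1 := by
        intro q hq
        rcases List.mem_cons.mp hq with heq | hqtl
        · rw [heq]
        · exact ((List.pairwise_cons.mp hPWI').1 q hqtl).1
      have hI't : ∀ q ∈ h' :: tl', th + 1 ≤ (o' + q.2) / D := by
        intro q hq
        rcases List.mem_cons.mp hq with heq | hqtl
        · rw [heq]; exact hth1
        · have hR : Rle h' q := (List.pairwise_cons.mp hPWI').1 q hqtl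
          exact hth1.trans (Nat.div_le_div_right (Nat.add_le_add_left hR.2.1 o'))
      have hwin' : ∀ p ∈ h' :: tl', ∃ s, ∀ q ∈ h' :: tl', q.1 = p.1 →
          q.2 ∈ ({s, s + 1, s + 2} : Set ℕ) := by
        intro p hp
        obtain ⟨s, hs⟩ := hwin p (hI'mem p hp)
        exact ⟨s, fun q hq hq1 => hs q (hI'mem q hq) hq1⟩
      have hihc := ih (h' :: tl') hlenI' hPWI'
        (fun p hp => hsym p (hI'mem p hp))
        (fun p hp => hlt p (hI'mem p hp))
        hwin'
        (fun p hp => htmax p (hI'mem p hp))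
        b1 (th + 1)
        (le_of_lt (hlt h' (hI'mem h' hh'I')))
        (by omega)
        hI'b1 hI't
      -- combine
      have hlsum : I.length = G.length + (h' :: tl').length := by rw [← hGI]; simp
      have e1 : 6 * N * d * t0 ≤ 6 * N * d * th := Nat.mul_le_mul_left _ ht0th
      have e2 : 6 * N * d * (th + 1) = 6 * N * d * th + 6 * N * d := by ring
      have e3 : N * I.length = N * G.length + N * (h' :: tl').length := by
        rw [hlsum]; ring
      omega


lemma rep_length (w : List σ) (t : ℕ) : (rep w t).length = t * w.length := by
  induction t with
  | zero => simp [rep]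
  | succ t ih =>
    have : rep w (t + 1) = w ++ rep w t := by
      simp [rep, List.replicate_succ]
    rw [this]
    simp [ih]
    ring

lemma rep_getElem (w : List σ) (t q : ℕ) (hq : q < t * w.length) :
    (rep w t)[q]? = w[q % w.length]? := by
  induction t generalizing q with
  | zero => omega
  | succ t ih =>
    have hrw : rep w (t + 1) = w ++ rep w t := by
      simp [rep, List.replicate_succ]
    rw [hrw]
    have hmul : (t + 1) * w.length = t * w.length + w.length := by ring
    rcases Nat.lt_or_ge q w.length with h | h
    · rw [List.getElem?_append_left h, Nat.mod_eq_of_lt h]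
    · rw [List.getElem?_append_right h, ih (q - w.length) (by omega),
        Nat.mod_eq_sub_mod h]

lemma blocks_length (n dd : ℕ) (g : Fin n → σ) :
    (List.ofFn fun i => List.replicate dd (g i)).flatten.length = n * dd := by
  rw [List.length_flatten, List.map_ofFn]
  have h1 : (List.length ∘ fun i : Fin n => List.replicate dd (g i)) = fun _ => dd := by
    funext i; simp
  rw [h1, List.ofFn_const, List.sum_replicate, smul_eq_mul]

lemma blocks_getElem (n dd : ℕ) (g : Fin n → σ) (q : ℕ) (hq : q < n * dd) :
    (List.ofFn fun i => List.replicate dd (g i)).flatten[q]? =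
      some (g ⟨q / dd, Nat.div_lt_of_lt_mul (Nat.mul_comm n dd ▸ hq)⟩) := by
  induction n generalizing q with
  | zero => simp at hq
  | succ n ih =>
    have hdd : 0 < dd := by
      rcases Nat.eq_zero_or_pos dd with rfl | h
      · simp at hq
      · exact h
    rw [List.ofFn_succ, List.flatten_cons]
    rcases Nat.lt_or_ge q dd with h | h
    · rw [List.getElem?_append_left (by simpa using h)]
      have h1 : q / dd = 0 := Nat.div_eq_of_lt h
      simp only [List.getElem?_replicate, if_pos h]
      congr 1
      congr 1
      exact Fin.ext (by simp [h1])
    · rw [List.getElem?_append_right (by simpa using h)]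
      have h2 : q - dd < n * dd := by
        have : q < n * dd + dd := by rw [Nat.succ_mul] at hq; omega
        omega
      have h3 := ih (fun i => g i.succ) (q - dd) h2
      simp only [List.length_replicate]
      rw [h3]
      congr 1
      congr 1
      apply Fin.ext
      simp only [Fin.val_succ]
      have h5 : q = (q - dd) + dd := by omega
      calc (q - dd) / dd + 1 = ((q - dd) + dd) / dd := (Nat.add_div_right _ hdd).symm
        _ = q / dd := by rw [← h5]

lemma feldman_length (N j M : ℕ) (a : Fin N → σ) (hjM : j ≤ M) :
    (feldmanPattern N a j M).length = N ^ (2 * M + 3) := by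
  rw [feldmanPattern, rep_length, blocks_length]
  rw [← pow_succ', ← pow_add]
  congr 1
  omega

lemma feldman_getElem (N j M q : ℕ) (a : Fin N → σ) (hN : 0 < N)
    (hq : q < (feldmanPattern N a j M).length) :
    (feldmanPattern N a j M)[q]? = some (a ⟨(q / N ^ (2 * j)) % N, Nat.mod_lt _ hN⟩) := by
  have hlen : (feldmanPattern N a j M).length =
      N ^ (2 * (M - j) + 2) * (N * N ^ (2 * j)) := by
    rw [feldmanPattern, rep_length, blocks_length]
  rw [feldmanPattern, rep_getElem _ _ _ (by rw [blocks_length]; rw [hlen] at hq; exact hq)]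
  rw [blocks_length]
  have hmod : q % (N * N ^ (2 * j)) < N * N ^ (2 * j) := by
    apply Nat.mod_lt
    positivity
  rw [blocks_getElem _ _ _ _ hmod]
  congr 1
  congr 1
  apply Fin.ext
  simp only []
  rw [mul_comm N (N ^ (2 * j))]
  exact Nat.mod_mul_right_div_self q (N ^ (2 * j)) N


lemma infix_getElem {x pat : List σ} (h : x <:+: pat) :
    ∃ o, o + x.length ≤ pat.length ∧ ∀ i < x.length, x[i]? = pat[o + i]? := by
  obtain ⟨s, t, heq⟩ := h
  refine ⟨s.length, ?_, ?_⟩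
  · rw [← heq]; simp
  · intro i hi
    rw [← heq, List.getElem?_append_left (by simp; omega),
      List.getElem?_append_right (by omega)]
    congr 1
    omega

lemma approx_bound {N M j k : ℕ} (hN : 20 ≤ N) (hjM : j ≤ M) (hjk : j < k)
    {a : Fin N → σ} (ha : Function.Injective a) {B Bb : List σ}
    (hB : B <:+: feldmanPattern N a j M) (hBb : Bb <:+: feldmanPattern N a k M)
    (hBblen : N ^ (2 * M + 2) ≤ Bb.length)
    {I : List (ℕ × ℕ)} (hI : IsApproxMatch B Bb I) :
    N * I.length ≤ 3 * (B.length + Bb.length) := by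
  have hN0 : 0 < N := by omega
  set d := N ^ (2 * j) with hd
  set D := N ^ (2 * k) with hD
  have hd0 : 0 < d := Nat.pow_pos hN0
  have hD0 : 0 < D := Nat.pow_pos hN0
  obtain ⟨o, hoB, hBget⟩ := infix_getElem hB
  obtain ⟨o', hoBb, hBbget⟩ := infix_getElem hBb
  obtain ⟨hch, hmem, hwin⟩ := hI
  have hPW : I.Pairwise Rle := by
    haveI : IsTrans (ℕ × ℕ) Rle := ⟨fun _ _ _ hab hbc => Rle_trans hab hbc⟩
    exact List.isChain_iff_pairwise.mp hch
  have hBbpos : 0 < Bb.length := lt_of_lt_of_le (Nat.pow_pos hN0) hBblen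
  set y := Bb.length - 1 with hy
  have hy1 : Bb.length = y + 1 := by omega
  have hsym : ∀ p ∈ I, ((o + p.1) / d) % N = ((o' + p.2) / D) % N := by
    intro p hp
    obtain ⟨h1, h2, h3⟩ := hmem p hp
    have e1 : B[p.1]? = some (a ⟨((o + p.1) / d) % N, Nat.mod_lt _ hN0⟩) := by
      rw [hBget p.1 h1]
      exact feldman_getElem N j M (o + p.1) a hN0 (by omega)
    have e2 : Bb[p.2]? = some (a ⟨((o' + p.2) / D) % N, Nat.mod_lt _ hN0⟩) := by
      rw [hBbget p.2 h2]
      exact feldman_getElem N k M (o' + p.2) a hN0 (by omega)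
    rw [e1, e2] at h3
    have h4 := ha (Option.some.inj h3)
    exact congrArg Fin.val h4
  set tmax := (o' + y) / D with htmaxdef
  have hcb := count_bound (N := N) (d := d) (D := D) (o := o) (o' := o')
    (lenB := B.length) (tmax := tmax) hN0 hd0 I.length I le_rfl hPW hsym
    (fun p hp => (hmem p hp).1)
    (fun p hp => ((hwin p hp).1))
    (fun p hp => Nat.div_le_div_right (by have := (hmem p hp).2.1; omega))
    0 (o' / D) (Nat.zero_le _)
    (le_trans (Nat.div_le_div_right (by omega)) (Nat.le_succ _))
    (fun p _ => Nat.zero_le _)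
    (fun p _ => Nat.div_le_div_right (by omega))
  -- arithmetic cleanup
  have hA : tmax ≤ o' / D + y / D + 1 := by
    have h := Nat.add_div (a := o') (b := y) hD0
    rw [htmaxdef, h]
    split_ifs <;> omega
  have hE1 : 6 * N * d * (tmax + 1) ≤
      6 * N * d * (o' / D) + 6 * (N * d * (y / D)) + 12 * (N * d) := by
    calc 6 * N * d * (tmax + 1) ≤ 6 * N * d * (o' / D + y / D + 2) :=
          Nat.mul_le_mul_left _ (by omega)
      _ = 6 * N * d * (o' / D) + 6 * (N * d * (y / D)) + 12 * (N * d) := by ring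
  have hE2 : 6 * (N * d * (y / D)) ≤ y := by
    have s1 : d * (N * N) ≤ D := by
      have : d * (N * N) = N ^ (2 * j + 2) := by
        rw [hd, pow_add]; ring
      rw [this, hD]
      exact Nat.pow_le_pow_right hN0 (by omega)
    have s2 : y / D ≤ y / (d * (N * N)) :=
      Nat.div_le_div_left s1 (by positivity)
    have s3 : N * d * (y / (d * (N * N))) ≤ N * d * y / (d * (N * N)) :=
      Nat.mul_div_le_mul_div_assoc _ _ _
    have s4 : N * d * y / (d * (N * N)) = y / N := by
      have h1 : d * (N * N) = N * d * N := by ring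
      rw [h1]
      exact Nat.mul_div_mul_left _ _ (by positivity)
    have s5 : 6 * (y / N) ≤ y := by
      calc 6 * (y / N) ≤ N * (y / N) := Nat.mul_le_mul_right _ (by omega)
        _ ≤ y := Nat.mul_div_le _ _
    calc 6 * (N * d * (y / D)) ≤ 6 * (N * d * (y / (d * (N * N)))) :=
          Nat.mul_le_mul_left _ (Nat.mul_le_mul_left _ s2)
      _ ≤ 6 * (N * d * y / (d * (N * N))) := Nat.mul_le_mul_left _ s3
      _ = 6 * (y / N) := by rw [s4]
      _ ≤ y := s5
  have hE3 : 12 * (N * d) ≤ Bb.length := by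
    have h1 : N * d = N ^ (2 * j + 1) := by rw [hd, pow_succ]; ring
    have h2 : N ^ (2 * j + 1) ≤ N ^ (2 * M + 1) :=
      Nat.pow_le_pow_right hN0 (by omega)
    have h3 : 12 * N ^ (2 * M + 1) ≤ N * N ^ (2 * M + 1) :=
      Nat.mul_le_mul_right _ (by omega)
    have h4 : N * N ^ (2 * M + 1) = N ^ (2 * M + 2) := by rw [pow_succ]; ring
    calc 12 * (N * d) = 12 * N ^ (2 * j + 1) := by rw [h1]
      _ ≤ 12 * N ^ (2 * M + 1) := Nat.mul_le_mul_left _ h2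
      _ ≤ N * N ^ (2 * M + 1) := h3
      _ = N ^ (2 * M + 2) := h4
      _ ≤ Bb.length := hBblen
  omega


lemma approxMatch_swap {x y : List σ} {I : List (ℕ × ℕ)} (h : IsApproxMatch x y I) :
    IsApproxMatch y x (I.map Prod.swap) := by
  obtain ⟨hch, hmem, hwin⟩ := h
  refine ⟨?_, ?_, ?_⟩
  · show List.IsChain _ (List.map Prod.swap I)
    rw [List.isChain_map]
    exact hch.imp (fun {p q} hpq =>
      ⟨hpq.2.1, hpq.1, fun he => hpq.2.2 (Prod.swap_injective he)⟩)
  · intro p hp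
    obtain ⟨q, hq, rfl⟩ := List.mem_map.mp hp
    obtain ⟨h1, h2, h3⟩ := hmem q hq
    exact ⟨h2, h1, h3.symm⟩
  · intro p hp
    obtain ⟨q, hq, rfl⟩ := List.mem_map.mp hp
    obtain ⟨⟨s, hs⟩, ⟨t, ht⟩⟩ := hwin q hq
    constructor
    · refine ⟨t, fun r hr hr1 => ?_⟩
      obtain ⟨r', hr', rfl⟩ := List.mem_map.mp hr
      exact ht r' hr' hr1
    · refine ⟨s, fun r hr hr2 => ?_⟩
      obtain ⟨r', hr', rfl⟩ := List.mem_map.mp hr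
      exact hs r' hr' hr2

lemma isMatch_isApproxMatch {x y : List σ} {I : List (ℕ × ℕ)} (h : IsMatch x y I) :
    IsApproxMatch x y I := by
  obtain ⟨hch, hmem⟩ := h
  have hPWs : I.Pairwise (fun p q => p.1 < q.1 ∧ p.2 < q.2) := by
    haveI : IsTrans (ℕ × ℕ) (fun p q => p.1 < q.1 ∧ p.2 < q.2) :=
      ⟨fun _ _ _ h1 h2 => ⟨h1.1.trans h2.1, h1.2.trans h2.2⟩⟩
    exact List.isChain_iff_pairwise.mp hch
  have key : ∀ p ∈ I, ∀ q ∈ I, (q.1 = p.1 ∨ q.2 = p.2) → q = p := by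
    intro p hp q hq hor
    by_contra hne
    have hsym : Symmetric (fun p q : ℕ × ℕ =>
        (p.1 < q.1 ∧ p.2 < q.2) ∨ (q.1 < p.1 ∧ q.2 < p.2)) :=
      fun _ _ hh => hh.symm
    haveI : Std.Symm (fun p q : ℕ × ℕ =>
        (p.1 < q.1 ∧ p.2 < q.2) ∨ (q.1 < p.1 ∧ q.2 < p.2)) := ⟨fun _ _ hh => hsym hh⟩
    have hall := List.Pairwise.forall (R := fun p q : ℕ × ℕ =>
        (p.1 < q.1 ∧ p.2 < q.2) ∨ (q.1 < p.1 ∧ q.2 < p.2)) (hPWs.imp (fun {_ _} hh => Or.inl hh)) hq hp hne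
    rcases hall with ⟨ha1, ha2⟩ | ⟨ha1, ha2⟩ <;> rcases hor with hh | hh <;> omega
  refine ⟨hch.imp (fun {p q} hpq =>
      ⟨le_of_lt hpq.1, le_of_lt hpq.2,
        fun he => absurd (congrArg Prod.fst he) (Nat.ne_of_lt hpq.1)⟩), hmem, ?_⟩
  intro p hp
  constructor
  · refine ⟨p.2, fun q hq h1 => ?_⟩
    rw [key p hp q hq (Or.inl h1)]
    left; rfl
  · refine ⟨p.1, fun q hq h2 => ?_⟩
    rw [key p hp q hq (Or.inr h2)]
    left; rfl


end S13

open S13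

/-- Let `a₁, …, a_N` be distinct symbols, `N ≥ 20`, `M ≥ 2`, and let
`B_j` be the Feldman patterns. If `B` and `B̄` are consecutive substrings of `B_j` and
`B_k` with `j ≠ k`, `1 ≤ j, k ≤ M`, of lengths at least `N^{2M+2}`, then
`f̄(B,B̄) > 1 − 4/√N` and `f̃(B,B̄) > 1 − 12/√N`. -/
theorem statement13 {σ : Type*} (N M : ℕ) (hN : 20 ≤ N) (hM : 2 ≤ M)
    (a : Fin N → σ) (ha : Function.Injective a)
    (j k : ℕ) (hj1 : 1 ≤ j) (hjM : j ≤ M) (hk1 : 1 ≤ k) (hkM : k ≤ M) (hjk : j ≠ k)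
    (B Bb : List σ) (hB : B <:+: feldmanPattern N a j M) (hBb : Bb <:+: feldmanPattern N a k M)
    (hBlen : N ^ (2 * M + 2) ≤ B.length) (hBblen : N ^ (2 * M + 2) ≤ Bb.length) :
    1 - 4 / Real.sqrt N < fbar B Bb ∧ 1 - 12 / Real.sqrt N < ftilde B Bb := by
  have hN0 : 0 < N := by omega
  have key : ∀ I, IsApproxMatch B Bb I → N * I.length ≤ 3 * (B.length + Bb.length) := by
    intro I hI
    rcases Nat.lt_or_ge j k with hlt | hge
    · exact approx_bound hN hjM hlt ha hB hBb hBblen hI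
    · have hlt : k < j := by omega
      have h2 := approx_bound hN hkM hlt ha hBb hB hBlen (approxMatch_swap hI)
      rw [List.length_map] at h2
      omega
  have hLpos : 0 < B.length := lt_of_lt_of_le (Nat.pow_pos hN0) hBlen
  have hmA : maxApproxMatch B Bb * N ≤ 3 * (B.length + Bb.length) := by
    have h1 : maxApproxMatch B Bb ≤ 3 * (B.length + Bb.length) / N := by
      apply csSup_le'
      rintro r ⟨I, hI, rfl⟩
      rw [Nat.le_div_iff_mul_le hN0, Nat.mul_comm]
      exact key I hI
    calc maxApproxMatch B Bb * N ≤ 3 * (B.length + Bb.length) / N * N :=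
          Nat.mul_le_mul_right _ h1
      _ ≤ 3 * (B.length + Bb.length) := Nat.div_mul_le_self _ _
  have hmM : maxMatch B Bb * N ≤ 3 * (B.length + Bb.length) := by
    have h1 : maxMatch B Bb ≤ 3 * (B.length + Bb.length) / N := by
      apply csSup_le'
      rintro r ⟨I, hI, rfl⟩
      rw [Nat.le_div_iff_mul_le hN0, Nat.mul_comm]
      exact key I (isMatch_isApproxMatch hI)
    calc maxMatch B Bb * N ≤ 3 * (B.length + Bb.length) / N * N :=
          Nat.mul_le_mul_right _ h1
      _ ≤ 3 * (B.length + Bb.length) := Nat.div_mul_le_self _ _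
  -- real arithmetic
  have hNR : (0 : ℝ) < N := by exact_mod_cast hN0
  have hsum : (0 : ℝ) < (B.length : ℝ) + (Bb.length : ℝ) := by
    have : (0 : ℝ) < (B.length : ℝ) := by exact_mod_cast hLpos
    have h2 : (0 : ℝ) ≤ (Bb.length : ℝ) := Nat.cast_nonneg _
    linarith
  have hmAR : (maxApproxMatch B Bb : ℝ) * N ≤ 3 * ((B.length : ℝ) + Bb.length) := by
    exact_mod_cast hmA
  have hmMR : (maxMatch B Bb : ℝ) * N ≤ 3 * ((B.length : ℝ) + Bb.length) := by
    exact_mod_cast hmM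
  have hsq : (4 : ℝ) ≤ Real.sqrt N := by
    have h1 : Real.sqrt 16 ≤ Real.sqrt N := Real.sqrt_le_sqrt (by exact_mod_cast (by omega : 16 ≤ N))
    have h2 : Real.sqrt 16 = 4 := by
      rw [show (16 : ℝ) = 4 ^ 2 by norm_num, Real.sqrt_sq (by norm_num)]
    linarith
  have hsN : Real.sqrt N * Real.sqrt N = N := Real.mul_self_sqrt (Nat.cast_nonneg N)
  have hsqpos : (0 : ℝ) < Real.sqrt N := by linarith
  have hbarle : 2 * (maxMatch B Bb : ℝ) / ((B.length : ℝ) + Bb.length) ≤ 6 / N := by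
    rw [div_le_div_iff₀ hsum hNR]
    nlinarith
  have htilde : 2 * (maxApproxMatch B Bb : ℝ) / ((B.length : ℝ) + Bb.length) ≤ 6 / N := by
    rw [div_le_div_iff₀ hsum hNR]
    nlinarith
  have h6lt4 : 6 / (N : ℝ) < 4 / Real.sqrt N := by
    rw [div_lt_div_iff₀ hNR hsqpos]
    nlinarith
  have h6lt12 : 6 / (N : ℝ) < 12 / Real.sqrt N := by
    rw [div_lt_div_iff₀ hNR hsqpos]
    nlinarith
  constructor
  · rw [fbar]
    push_cast
    linarith
  · rw [ftilde]
    have hge : 1 - 2 * (maxApproxMatch B Bb : ℝ) / ((B.length : ℝ) + Bb.length) ≤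
        max 0 (1 - 2 * (maxApproxMatch B Bb : ℝ) / ((B.length : ℝ) + Bb.length)) :=
      le_max_right _ _
    push_cast
    push_cast at hge
    linarith
end

section
/- Suppose a_1, a_2, …, a_N are distinct symbols in an alphabet Σ, N ≥ 20, M ≥ 2 and l ≥ 1 are integers, and for j = 1, …, M define B_j = (a_1^{l·N^{2j}} a_2^{l·N^{2j}} ⋯ a_N^{l·N^{2j}})^{N^{2M−2j+2}} (the Feldman pattern in which each symbol occurrence is replaced by l repetitions). If B and B̄ are strings of consecutive symbols in B_j and B_k respectively, where j ≠ k, |B| ≥ l·N^{2M+2} and |B̄| ≥ l·N^{2M+2}, then f̄(B, B̄) > 1 − 4/√N and f̃(B, B̄) > 1 − 12/√N. -/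
open MeasureTheory

open Paper List

/-- The `j`-th Feldman pattern on the symbols `a 0, …, a (N−1)` in which each symbol
occurrence is replaced by `l` repetitions:
`B_j = (a₁^{l·N^{2j}} a₂^{l·N^{2j}} ⋯ a_N^{l·N^{2j}})^{N^{2M−2j+2}}`. -/
def feldmanPatternRep {σ : Type*} (N : ℕ) (a : Fin N → σ) (l j M : ℕ) : List σ :=
  Paper.rep ((List.ofFn fun i : Fin N => List.replicate (l * N ^ (2 * j)) (a i)).flatten)
    (N ^ (2 * (M - j) + 2))


section Aux

lemma fin_mk_eq {n a b : ℕ} (h : a = b) (ha : a < n) (hb : b < n) :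
    (⟨a, ha⟩ : Fin n) = ⟨b, hb⟩ := by subst h; rfl

lemma getElem?_flatten_const {σ : Type*} (p : ℕ) (hp : 0 < p) :
    ∀ (L : List (List σ)), (∀ x ∈ L, x.length = p) → ∀ i,
      L.flatten[i]? = (L[i / p]?.bind fun x => x[i % p]?)
  | [], _, i => by simp
  | x :: L, hL, i => by
    have hx : x.length = p := hL x mem_cons_self
    rw [flatten_cons, getElem?_append]
    by_cases h : i < p
    · rw [if_pos (by omega), Nat.div_eq_of_lt h, Nat.mod_eq_of_lt h]
      simp
    · rw [if_neg (by omega), getElem?_flatten_const p hp L (fun y hy => hL y (mem_cons_of_mem _ hy)) (i - x.length)]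
      have h1 : i / p = (i - p) / p + 1 := by
        rw [Nat.div_eq_sub_div hp (by omega)]
      have h2 : i % p = (i - p) % p := by
        conv_lhs => rw [show i = (i - p) + p by omega]
        rw [Nat.add_mod_right]
      rw [hx, h1, h2]
      simp

section
variable {σ : Type*} (N : ℕ) (a : Fin N → σ) (l j M : ℕ)

lemma block_length : ((List.ofFn fun i : Fin N => List.replicate (l * N ^ (2 * j)) (a i)).flatten).length
    = N * (l * N ^ (2 * j)) := by
  simp [List.length_flatten, Function.comp_def, mul_comm]

lemma feldman_length : (feldmanPatternRep N a l j M).length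
    = N ^ (2 * (M - j) + 2) * (N * (l * N ^ (2 * j))) := by
  simp [feldmanPatternRep, Paper.rep, List.length_flatten, Function.comp_def, block_length,
    mul_comm]

lemma feldman_getElem? (hN : 0 < N) (hl : 0 < l) (i : ℕ)
    (hi : i < (feldmanPatternRep N a l j M).length) :
    (feldmanPatternRep N a l j M)[i]? =
      some (a ⟨(i / (l * N ^ (2 * j))) % N, Nat.mod_lt _ hN⟩) := by
  set p := l * N ^ (2 * j) with hpdef
  have hp : 0 < p := by positivity
  have hNp : 0 < N * p := by positivity
  rw [feldman_length] at hi
  set bl := (List.ofFn fun i : Fin N => List.replicate p (a i)).flatten with hbl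
  have hbllen : bl.length = N * p := block_length N a l j
  have hblget : ∀ m, m < N * p → bl[m]? = some (a ⟨m / p % N, Nat.mod_lt _ hN⟩) := by
    intro m hm
    rw [hbl, getElem?_flatten_const p hp _ (by
      intro x hx
      rw [List.mem_ofFn] at hx
      obtain ⟨i, rfl⟩ := hx
      simp)]
    have hdiv : m / p < N := by
      rw [Nat.div_lt_iff_lt_mul hp]; omega
    rw [List.getElem?_ofFn]
    have : List.ofFnNthVal (fun i : Fin N => List.replicate p (a i)) (m / p)
        = some (List.replicate p (a ⟨m / p, hdiv⟩)) := by
      simp [List.ofFnNthVal, hdiv]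
    rw [dif_pos hdiv]
    have hmod : m % p < p := Nat.mod_lt _ hp
    simp only [Option.bind_some, List.getElem?_replicate, if_pos hmod]
    exact congrArg (fun z => some (a z)) (fin_mk_eq (Nat.mod_eq_of_lt hdiv).symm _ _)
  show (List.replicate (N ^ (2 * (M - j) + 2)) bl).flatten[i]? = _
  rw [getElem?_flatten_const (N * p) hNp _ (by
    intro x hx
    rw [List.eq_of_mem_replicate hx]
    exact hbllen)]
  have hdiv : i / (N * p) < N ^ (2 * (M - j) + 2) := by
    rw [Nat.div_lt_iff_lt_mul hNp]
    calc i < N ^ (2 * (M - j) + 2) * (N * p) := hi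
    _ = _ := by ring
  rw [List.getElem?_replicate, if_pos hdiv, Option.bind_some,
    hblget _ (Nat.mod_lt _ hNp)]
  refine congrArg (fun z => some (a z)) (fin_mk_eq ?_ _ _)
  show i % (N * p) / p % N = i / p % N
  rw [show N * p = p * N by ring, Nat.mod_mul_right_div_self]
  exact Nat.mod_mod_of_dvd _ dvd_rfl

end


lemma nat_add_div_le (a b c : ℕ) : (a + b) / c ≤ a / c + b / c + 1 := by
  rcases Nat.eq_zero_or_pos c with hc | hc
  · simp [hc]
  have ha := Nat.div_add_mod a c
  have hb := Nat.div_add_mod b c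
  have ha' := Nat.mod_lt a hc
  have hb' := Nat.mod_lt b hc
  have : (a + b) / c < a / c + b / c + 2 := by
    rw [Nat.div_lt_iff_lt_mul hc]
    nlinarith
  omega

/-- Key counting lemma. -/
lemma count_key (N p q o oo Xb Yb r : ℕ) (hp : 0 < p) (hq : 0 < q) (hN : 0 < N)
    (x y : Fin r → ℕ) (hx : StrictMono x) (hy : StrictMono y)
    (hxb : ∀ s, x s < Xb) (hyb : ∀ s, y s < Yb)
    (heq : ∀ s, ((o + x s) / p) % N = ((oo + y s) / q) % N) :
    r ≤ (Xb / (N * p) + Yb / q + 3) * p := by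
  rcases Nat.eq_zero_or_pos r with hr | hr
  · simp [hr]
  have hNp : 0 < N * p := by positivity
  set u : Fin r → ℕ := fun s => (o + x s) / (N * p) with hu
  set t : Fin r → ℕ := fun s => (oo + y s) / q with ht
  have hum : Monotone u := fun s s' hss =>
    Nat.div_le_div_right (by have := hx.monotone hss; omega)
  have htm : Monotone t := fun s s' hss =>
    Nat.div_le_div_right (by have := hy.monotone hss; omega)
  set s0 : Fin r := ⟨0, hr⟩
  set s1 : Fin r := ⟨r - 1, by omega⟩
  set F : Fin r → ℕ × ℕ := fun s => (u s + t s, (o + x s) % p) with hF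
  have key : ∀ s s' : Fin r, s < s' → F s ≠ F s' := by
    intro s s' h hEq
    rw [hF, Prod.mk.injEq] at hEq
    obtain ⟨h1, h2⟩ := hEq
    have husle := hum h.le
    have htsle := htm h.le
    have hueq : u s = u s' := by omega
    have hteq : t s = t s' := by omega
    have hxlt : o + x s < o + x s' := by have := hx h; omega
    -- equal p-block
    have hdiv_eq : (o + x s) / p = (o + x s') / p := by
      have e2 : (o + x s) / p % N = (o + x s') / p % N := by
        rw [heq s, heq s']
        exact congrArg (fun z => z % N) hteq
      have d1 := Nat.div_add_mod ((o + x s) / p) N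
      have d2 := Nat.div_add_mod ((o + x s') / p) N
      have e1 : (o + x s) / p / N = (o + x s') / p / N := by
        rw [Nat.div_div_eq_div_mul, Nat.div_div_eq_div_mul, mul_comm p N]
        exact hueq
      rw [e1, e2] at d1
      omega
    have m1 := Nat.div_add_mod (o + x s) p
    have m2 := Nat.div_add_mod (o + x s') p
    rw [hdiv_eq] at m1
    omega
  have hinj : Function.Injective F := by
    intro s s' hss
    rcases lt_trichotomy s s' with h | h | h
    · exact absurd hss (key s s' h)
    · exact h
    · exact absurd hss.symm (key s' s h)
  have hmem : ∀ s, F s ∈ Finset.Icc (u s0 + t s0) (u s1 + t s1) ×ˢ Finset.range p := by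
    intro s
    have hs0 : s0 ≤ s := by simp [s0, Fin.le_def]
    have hs1 : s ≤ s1 := by simp only [s1, Fin.le_def]; omega
    have := hum hs0; have := htm hs0; have := hum hs1; have := htm hs1
    simp only [F, Finset.mem_product, Finset.mem_Icc, Finset.mem_range]
    exact ⟨⟨by omega, by omega⟩, Nat.mod_lt _ hp⟩
  have hcard := Finset.card_le_card_of_injOn (s := (Finset.univ : Finset (Fin r))) F (fun s _ => hmem s) (hinj.injOn)
  rw [Finset.card_univ, Fintype.card_fin, Finset.card_product, Nat.card_Icc,
    Finset.card_range] at hcard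
  -- bound the Icc width
  have hu1 : u s1 ≤ o / (N * p) + Xb / (N * p) + 1 := by
    calc u s1 ≤ (o + Xb) / (N * p) := Nat.div_le_div_right (by have := hxb s1; omega)
    _ ≤ _ := nat_add_div_le o Xb (N * p)
  have hu0 : o / (N * p) ≤ u s0 := Nat.div_le_div_right (by omega)
  have ht1 : t s1 ≤ oo / q + Yb / q + 1 := by
    calc t s1 ≤ (oo + Yb) / q := Nat.div_le_div_right (by have := hyb s1; omega)
    _ ≤ _ := nat_add_div_le oo Yb q
  have ht0 : oo / q ≤ t s0 := Nat.div_le_div_right (by omega)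
  have hw : u s1 + t s1 + 1 - (u s0 + t s0) ≤ Xb / (N * p) + Yb / q + 3 := by
    generalize o / (N * p) = g at hu0 hu1
    generalize Xb / (N * p) = X at hu1 ⊢
    generalize oo / q = g' at ht0 ht1
    generalize Yb / q = Y at ht1 ⊢
    omega
  exact hcard.trans (Nat.mul_le_mul_right _ hw)


lemma infix_getElem? {σ : Type*} {B w : List σ} (h : B <:+: w) :
    ∃ o, o + B.length ≤ w.length ∧ ∀ x, x < B.length → B[x]? = w[o + x]? := by
  obtain ⟨s, t, rfl⟩ := h
  refine ⟨s.length, by simp, ?_⟩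
  intro x hx
  rw [List.append_assoc, List.getElem?_append, if_neg (by omega), Nat.add_sub_cancel_left,
    List.getElem?_append, if_pos hx]


lemma final_numeric (N : ℕ) (hN : 20 ≤ N) (Lb Lbb r : ℝ) (hLb : 0 < Lb) (hLbb : 0 ≤ Lbb)
    (hr : r ≤ Lb / N + Lbb / (N:ℝ)^2 + 3 * Lb / (N:ℝ)^2) :
    r < 2 * (Lb + Lbb) / Real.sqrt N := by
  have hN0 : (0:ℝ) < N := by positivity
  set t := Real.sqrt N with htdef
  have ht2 : t ^ 2 = N := Real.sq_sqrt hN0.le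
  have ht4 : 4 < t := by
    have : (4:ℝ) = Real.sqrt 16 := by
      rw [show (16:ℝ) = 4 ^ 2 by norm_num, Real.sqrt_sq (by norm_num)]
    rw [this]
    apply Real.sqrt_lt_sqrt (by norm_num)
    have : (20:ℝ) ≤ N := by exact_mod_cast hN
    linarith
  have ht0 : 0 < t := by linarith
  have key : 1 / (N:ℝ) + 3 / (N:ℝ)^2 < 2 / t := by
    rw [div_add_div _ _ (by positivity) (by positivity), div_lt_div_iff₀ (by positivity) ht0]
    rw [← ht2]
    have hp3 : 0 < t^3 := by positivity
    have hp5 : 0 < t^5 := by positivity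
    have ht2ge : (1:ℝ) ≤ t^2 := by nlinarith
    have h1 : t^3 * 1 ≤ t^3 * t^2 := mul_le_mul_of_nonneg_left ht2ge hp3.le
    have h2 : 4 * t^5 < t * t^5 := by nlinarith
    nlinarith [h1, h2, hp5, hp3]
  have hL : 0 < Lb + Lbb := by linarith
  calc r ≤ Lb / N + Lbb / (N:ℝ)^2 + 3 * Lb / (N:ℝ)^2 := hr
    _ ≤ (Lb + Lbb) / N + 3 * (Lb + Lbb) / (N:ℝ)^2 := by
        have h1 : 0 ≤ Lbb / (N:ℝ) := by positivity
        have h2 : 0 ≤ Lbb / (N:ℝ)^2 := by positivity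
        have e1 : (Lb + Lbb) / (N:ℝ) = Lb / N + Lbb / N := by ring
        have e2 : 3 * (Lb + Lbb) / (N:ℝ)^2 = 3 * Lb / (N:ℝ)^2 + 3 * (Lbb / (N:ℝ)^2) := by ring
        rw [e1, e2]
        linarith
    _ = (Lb + Lbb) * (1 / N + 3 / (N:ℝ)^2) := by ring
    _ < (Lb + Lbb) * (2 / t) := by exact mul_lt_mul_of_pos_left key hL
    _ = 2 * (Lb + Lbb) / t := by ring

lemma match_le {σ : Type*} (N M l : ℕ) (hN : 20 ≤ N) (hl : 1 ≤ l)
    (a : Fin N → σ) (ha : Function.Injective a)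
    (j k : ℕ) (hjk : j < k) (hkM : k ≤ M)
    (B Bb : List σ) (hB : B <:+: feldmanPatternRep N a l j M)
    (hBb : Bb <:+: feldmanPatternRep N a l k M)
    (hBlen : l * N ^ (2 * M + 2) ≤ B.length)
    (r : ℕ) (x y : Fin r → ℕ) (hx : StrictMono x) (hy : StrictMono y)
    (hxb : ∀ s, x s < B.length) (hyb : ∀ s, y s < Bb.length)
    (hsym : ∀ s, B[x s]? = Bb[y s]?) :
    (r : ℝ) < 2 * ((B.length : ℝ) + (Bb.length : ℝ)) / Real.sqrt N := by
  have hN0 : 0 < N := by omega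
  set p := l * N ^ (2 * j) with hpdef
  set q := l * N ^ (2 * k) with hqdef
  have hp : 0 < p := by positivity
  have hq : 0 < q := by positivity
  obtain ⟨o, hoB, hgo⟩ := infix_getElem? hB
  obtain ⟨oo, hooB, hgoo⟩ := infix_getElem? hBb
  have hlenj := feldman_length N a l j M
  have hlenk := feldman_length N a l k M
  have heq : ∀ s, ((o + x s) / p) % N = ((oo + y s) / q) % N := by
    intro s
    have hxs := hxb s
    have hys := hyb s
    have e1 := hgo _ hxs
    have e2 := hgoo _ hys
    rw [feldman_getElem? N a l j M hN0 hl _ (by omega)] at e1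
    rw [feldman_getElem? N a l k M hN0 hl _ (by omega)] at e2
    have := hsym s
    rw [e1, e2] at this
    have h2 := ha (Option.some_injective _ this)
    exact congrArg Fin.val h2
  have hcount := count_key N p q o oo B.length Bb.length r hp hq hN0 x y hx hy hxb hyb heq
  -- pass to the reals
  have hpR : (0:ℝ) < p := by exact_mod_cast hp
  have hqR : (0:ℝ) < q := by exact_mod_cast hq
  have hNR : (0:ℝ) < N := by exact_mod_cast hN0
  have hrR : (r:ℝ) ≤ ((B.length / (N * p) : ℕ) : ℝ) * p + ((Bb.length / q : ℕ) : ℝ) * p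
      + 3 * p := by
    calc (r:ℝ) ≤ (((B.length / (N * p) + Bb.length / q + 3) * p : ℕ) : ℝ) := by
          exact_mod_cast hcount
    _ = _ := by push_cast; ring
  have c1 : ((B.length / (N * p) : ℕ) : ℝ) * p ≤ (B.length : ℝ) / N := by
    have h := Nat.cast_div_le (α := ℝ) (m := B.length) (n := N * p)
    have h2 : ((B.length / (N * p) : ℕ) : ℝ) * p ≤ (B.length : ℝ) / ((N : ℝ) * p) * p := by
      apply mul_le_mul_of_nonneg_right _ hpR.le
      calc ((B.length / (N * p) : ℕ) : ℝ) ≤ (B.length : ℝ) / ((N * p : ℕ) : ℝ) := h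
      _ = (B.length : ℝ) / ((N : ℝ) * p) := by push_cast; ring_nf
    calc ((B.length / (N * p) : ℕ) : ℝ) * p ≤ (B.length : ℝ) / ((N : ℝ) * p) * p := h2
    _ = (B.length : ℝ) / N := by field_simp
  have hq2 : N ^ 2 * p ≤ q := by
    rw [hpdef, hqdef]
    calc N ^ 2 * (l * N ^ (2 * j)) = l * N ^ (2 * j + 2) := by ring
    _ ≤ l * N ^ (2 * k) := Nat.mul_le_mul_left l (Nat.pow_le_pow_right hN0 (by omega))
  have hq2R : (N:ℝ) ^ 2 * p ≤ q := by exact_mod_cast hq2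
  have c2 : ((Bb.length / q : ℕ) : ℝ) * p ≤ (Bb.length : ℝ) / (N:ℝ) ^ 2 := by
    have h := Nat.cast_div_le (α := ℝ) (m := Bb.length) (n := q)
    calc ((Bb.length / q : ℕ) : ℝ) * p ≤ (Bb.length : ℝ) / (q : ℝ) * p :=
          mul_le_mul_of_nonneg_right h hpR.le
    _ = (Bb.length : ℝ) * (p / q) := by ring
    _ ≤ (Bb.length : ℝ) * (1 / (N:ℝ)^2) := by
        apply mul_le_mul_of_nonneg_left _ (by positivity)
        rw [div_le_div_iff₀ hqR (by positivity)]
        nlinarith [hq2R]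
    _ = (Bb.length : ℝ) / (N:ℝ)^2 := by ring
  have hpB : N ^ 2 * p ≤ B.length := by
    calc N ^ 2 * p = l * N ^ (2 * j + 2) := by rw [hpdef]; ring
    _ ≤ l * N ^ (2 * M + 2) := Nat.mul_le_mul_left l (Nat.pow_le_pow_right hN0 (by omega))
    _ ≤ B.length := hBlen
  have hpBR : (N:ℝ) ^ 2 * p ≤ (B.length : ℝ) := by exact_mod_cast hpB
  have c3 : 3 * (p:ℝ) ≤ 3 * (B.length : ℝ) / (N:ℝ) ^ 2 := by
    rw [le_div_iff₀ (by positivity)]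
    nlinarith [hpBR]
  have hBpos : (0:ℝ) < B.length := by
    have : 0 < l * N ^ (2 * M + 2) := by positivity
    have := hBlen
    exact_mod_cast (by omega : 0 < B.length)
  apply final_numeric N hN _ _ _ hBpos (by positivity)
  calc (r:ℝ) ≤ _ := hrR
  _ ≤ (B.length : ℝ) / N + (Bb.length : ℝ) / (N:ℝ)^2 + 3 * (B.length : ℝ) / (N:ℝ)^2 := by
      linarith [c1, c2, c3]

section Extract
variable {σ : Type*}

lemma strictmono_fin_bound {r n : ℕ} (x : Fin r → ℕ) (hx : StrictMono x)
    (hxb : ∀ s, x s < n) : r ≤ n := by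
  have := Finset.card_le_card_of_injOn (s := (Finset.univ : Finset (Fin r))) x
    (fun s _ => Finset.mem_range.mpr (hxb s)) (hx.injective.injOn)
  simpa using this

lemma isMatch_extract {A Bc : List σ} {I : List (ℕ × ℕ)} (h : Paper.IsMatch A Bc I) :
    ∃ x y : Fin I.length → ℕ, StrictMono x ∧ StrictMono y ∧
      (∀ s, x s < A.length) ∧ (∀ s, y s < Bc.length) ∧ (∀ s, A[x s]? = Bc[y s]?) := by
  haveI : IsTrans (ℕ × ℕ) (fun p q => p.1 < q.1 ∧ p.2 < q.2) :=
    ⟨fun a b c h1 h2 => ⟨h1.1.trans h2.1, h1.2.trans h2.2⟩⟩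
  have hpw := List.isChain_iff_pairwise.mp h.1
  rw [List.pairwise_iff_getElem] at hpw
  refine ⟨fun s => (I[s.1]'s.2).1, fun s => (I[s.1]'s.2).2, ?_, ?_, ?_, ?_, ?_⟩
  · intro s s' hss; exact (hpw s.1 s'.1 s.2 s'.2 hss).1
  · intro s s' hss; exact (hpw s.1 s'.1 s.2 s'.2 hss).2
  · intro s; exact (h.2 _ (List.getElem_mem s.2)).1
  · intro s; exact (h.2 _ (List.getElem_mem s.2)).2.1
  · intro s; exact (h.2 _ (List.getElem_mem s.2)).2.2

lemma isApprox_extract {A Bc : List σ} {I : List (ℕ × ℕ)} (h : Paper.IsApproxMatch A Bc I) :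
    ∃ x y : Fin ((I.length + 2) / 3) → ℕ, StrictMono x ∧ StrictMono y ∧
      (∀ s, x s < A.length) ∧ (∀ s, y s < Bc.length) ∧ (∀ s, A[x s]? = Bc[y s]?) := by
  haveI : IsTrans (ℕ × ℕ) (fun p q : ℕ × ℕ => p.1 ≤ q.1 ∧ p.2 ≤ q.2 ∧ p ≠ q) := by
    constructor
    rintro a b c ⟨h1, h2, h3⟩ ⟨h4, h5, h6⟩
    refine ⟨h1.trans h4, h2.trans h5, ?_⟩
    rintro rfl
    exact h3 (Prod.ext (le_antisymm h1 h4) (le_antisymm h2 h5))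
  have hpw := List.isChain_iff_pairwise.mp h.1
  rw [List.pairwise_iff_getElem] at hpw
  -- separation: indices 3 apart give strict increase in both coordinates
  have sep : ∀ s s' : ℕ, ∀ hs : s < I.length, ∀ hs' : s' < I.length, s + 3 ≤ s' →
      (I[s]'hs).1 < (I[s']'hs').1 ∧ (I[s]'hs).2 < (I[s']'hs').2 := by
    intro s s' hs hs' hsep
    have h1 : s + 1 < I.length := by omega
    have h2 : s + 2 < I.length := by omega
    have r01 := hpw s (s+1) hs h1 (by omega)
    have r12 := hpw (s+1) (s+2) h1 h2 (by omega)
    have r23 := hpw (s+2) s' h2 hs' (by omega)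
    have r03 := hpw s s' hs hs' (by omega)
    constructor
    · by_contra hcon
      have hv : (I[s]'hs).1 = (I[s']'hs').1 := by omega
      have e1 : (I[s+1]'h1).1 = (I[s]'hs).1 := by omega
      have e2 : (I[s+2]'h2).1 = (I[s]'hs).1 := by omega
      -- second coordinates strictly increase
      have st : ∀ u u' : ℕ, ∀ hu : u < I.length, ∀ hu' : u' < I.length, u < u' →
          (I[u]'hu).1 = (I[u']'hu').1 → (I[u]'hu).2 < (I[u']'hu').2 := by
        intro u u' hu hu' huu heq1
        have := hpw u u' hu hu' huu
        rcases this with ⟨ha1, ha2, ha3⟩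
        rcases lt_or_eq_of_le ha2 with h' | h'
        · exact h'
        · exact absurd (Prod.ext heq1 h') ha3
      have y01 := st s (s+1) hs h1 (by omega) e1.symm
      have y12 := st (s+1) (s+2) h1 h2 (by omega) (by omega)
      have y23 := st (s+2) s' h2 hs' (by omega) (by omega)
      obtain ⟨s0, hw⟩ := (h.2.2 _ (List.getElem_mem hs)).1
      have w0 := hw _ (List.getElem_mem hs) rfl
      have w1 := hw _ (List.getElem_mem h1) e1
      have w2 := hw _ (List.getElem_mem h2) e2
      have w3 := hw _ (List.getElem_mem hs') hv.symm
      simp only [Set.mem_insert_iff, Set.mem_singleton_iff] at w0 w1 w2 w3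
      omega
    · by_contra hcon
      have hv : (I[s]'hs).2 = (I[s']'hs').2 := by omega
      have e1 : (I[s+1]'h1).2 = (I[s]'hs).2 := by omega
      have e2 : (I[s+2]'h2).2 = (I[s]'hs).2 := by omega
      have st : ∀ u u' : ℕ, ∀ hu : u < I.length, ∀ hu' : u' < I.length, u < u' →
          (I[u]'hu).2 = (I[u']'hu').2 → (I[u]'hu).1 < (I[u']'hu').1 := by
        intro u u' hu hu' huu heq1
        have := hpw u u' hu hu' huu
        rcases this with ⟨ha1, ha2, ha3⟩
        rcases lt_or_eq_of_le ha1 with h' | h'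
        · exact h'
        · exact absurd (Prod.ext h' heq1) ha3
      have y01 := st s (s+1) hs h1 (by omega) e1.symm
      have y12 := st (s+1) (s+2) h1 h2 (by omega) (by omega)
      have y23 := st (s+2) s' h2 hs' (by omega) (by omega)
      obtain ⟨s0, hw⟩ := (h.2.2 _ (List.getElem_mem hs)).2
      have w0 := hw _ (List.getElem_mem hs) rfl
      have w1 := hw _ (List.getElem_mem h1) e1
      have w2 := hw _ (List.getElem_mem h2) e2
      have w3 := hw _ (List.getElem_mem hs') hv.symm
      simp only [Set.mem_insert_iff, Set.mem_singleton_iff] at w0 w1 w2 w3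
      omega
  have h3m : ∀ m : Fin ((I.length + 2) / 3), 3 * m.1 < I.length := by
    intro m
    have hm := m.2
    omega
  refine ⟨fun m => (I[3 * m.1]'(h3m m)).1, fun m => (I[3 * m.1]'(h3m m)).2, ?_, ?_, ?_, ?_, ?_⟩
  · intro m m' hmm
    exact (sep _ _ (h3m m) (h3m m') (by have := Fin.lt_iff_val_lt_val.mp hmm; omega)).1
  · intro m m' hmm
    exact (sep _ _ (h3m m) (h3m m') (by have := Fin.lt_iff_val_lt_val.mp hmm; omega)).2
  · intro m; exact (h.2.1 _ (List.getElem_mem (h3m m))).1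
  · intro m; exact (h.2.1 _ (List.getElem_mem (h3m m))).2.1
  · intro m; exact (h.2.1 _ (List.getElem_mem (h3m m))).2.2

end Extract


end Aux

/-- Let `a₁, …, a_N` be distinct symbols, `N ≥ 20`, `M ≥ 2`, `l ≥ 1`,
and let `B_j` be the Feldman patterns with each symbol repeated `l` times. If `B` and
`B̄` are consecutive substrings of `B_j` and `B_k` with `j ≠ k`, `1 ≤ j, k ≤ M`, of
lengths at least `l·N^{2M+2}`, then `f̄(B,B̄) > 1 − 4/√N` and `f̃(B,B̄) > 1 − 12/√N`. -/
theorem statement14 {σ : Type*} (N M l : ℕ) (hN : 20 ≤ N) (hM : 2 ≤ M) (hl : 1 ≤ l)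
    (a : Fin N → σ) (ha : Function.Injective a)
    (j k : ℕ) (hj1 : 1 ≤ j) (hjM : j ≤ M) (hk1 : 1 ≤ k) (hkM : k ≤ M) (hjk : j ≠ k)
    (B Bb : List σ) (hB : B <:+: feldmanPatternRep N a l j M)
    (hBb : Bb <:+: feldmanPatternRep N a l k M)
    (hBlen : l * N ^ (2 * M + 2) ≤ B.length) (hBblen : l * N ^ (2 * M + 2) ≤ Bb.length) :
    1 - 4 / Real.sqrt N < fbar B Bb ∧ 1 - 12 / Real.sqrt N < ftilde B Bb := by
  have hN0 : 0 < N := by omega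
  have hsq : 0 < Real.sqrt N := Real.sqrt_pos.mpr (by exact_mod_cast hN0)
  have hBpos : 0 < B.length := by
    have hx : 0 < l * N ^ (2 * M + 2) := by positivity
    omega
  have hBbpos : 0 < Bb.length := by
    have hx : 0 < l * N ^ (2 * M + 2) := by positivity
    omega
  have hden : (0:ℝ) < (B.length : ℝ) + (Bb.length : ℝ) := by positivity
  have core : ∀ (r : ℕ) (x y : Fin r → ℕ), StrictMono x → StrictMono y →
      (∀ s, x s < B.length) → (∀ s, y s < Bb.length) → (∀ s, B[x s]? = Bb[y s]?) →
      (r : ℝ) < 2 * ((B.length : ℝ) + (Bb.length : ℝ)) / Real.sqrt N := by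
    intro r x y hx hy hxb hyb hsym
    rcases Nat.lt_or_ge j k with h | h
    · exact match_le N M l hN hl a ha j k h hkM B Bb hB hBb hBlen r x y hx hy hxb hyb hsym
    · have hkj : k < j := by omega
      have h2 := match_le N M l hN hl a ha k j hkj hjM Bb B hBb hB hBblen r y x hy hx hyb hxb
        (fun s => (hsym s).symm)
      calc (r:ℝ) < 2 * ((Bb.length:ℝ) + (B.length:ℝ)) / Real.sqrt N := h2
      _ = _ := by ring
  have hmm : (Paper.maxMatch B Bb : ℝ)
      < 2 * ((B.length : ℝ) + (Bb.length : ℝ)) / Real.sqrt N := by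
    have hne : {r | ∃ I, Paper.IsMatch B Bb I ∧ I.length = r}.Nonempty :=
      ⟨0, [], ⟨List.isChain_nil, fun p hp => absurd hp List.not_mem_nil⟩, rfl⟩
    have hbdd : BddAbove {r | ∃ I, Paper.IsMatch B Bb I ∧ I.length = r} := by
      refine ⟨B.length, ?_⟩
      rintro r ⟨I, hI, rfl⟩
      obtain ⟨x, y, hx, hy, hxb, hyb, hsym⟩ := isMatch_extract hI
      exact strictmono_fin_bound x hx hxb
    obtain ⟨I, hI, hlen⟩ := Nat.sSup_mem hne hbdd
    obtain ⟨x, y, hx, hy, hxb, hyb, hsym⟩ := isMatch_extract hI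
    have h3 := core I.length x y hx hy hxb hyb hsym
    rw [hlen] at h3
    exact h3
  have hma : (Paper.maxApproxMatch B Bb : ℝ)
      < 6 * ((B.length : ℝ) + (Bb.length : ℝ)) / Real.sqrt N := by
    have hne : {r | ∃ I, Paper.IsApproxMatch B Bb I ∧ I.length = r}.Nonempty :=
      ⟨0, [], ⟨List.isChain_nil, fun p hp => absurd hp List.not_mem_nil,
        fun p hp => absurd hp List.not_mem_nil⟩, rfl⟩
    have hbdd : BddAbove {r | ∃ I, Paper.IsApproxMatch B Bb I ∧ I.length = r} := by
      refine ⟨3 * B.length, ?_⟩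
      rintro r ⟨I, hI, rfl⟩
      obtain ⟨x, y, hx, hy, hxb, hyb, hsym⟩ := isApprox_extract hI
      have h1 := strictmono_fin_bound x hx hxb
      omega
    obtain ⟨I, hI, hlen⟩ := Nat.sSup_mem hne hbdd
    obtain ⟨x, y, hx, hy, hxb, hyb, hsym⟩ := isApprox_extract hI
    have h3 := core _ x y hx hy hxb hyb hsym
    have h4 : (I.length : ℝ) ≤ 3 * (((I.length + 2) / 3 : ℕ) : ℝ) := by
      have : I.length ≤ 3 * ((I.length + 2) / 3) := by omega
      exact_mod_cast this
    have h5 : (I.length : ℝ) < 6 * ((B.length : ℝ) + (Bb.length : ℝ)) / Real.sqrt N := by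
      calc (I.length : ℝ) ≤ 3 * (((I.length + 2) / 3 : ℕ) : ℝ) := h4
      _ < 3 * (2 * ((B.length : ℝ) + (Bb.length : ℝ)) / Real.sqrt N) := by linarith
      _ = 6 * ((B.length : ℝ) + (Bb.length : ℝ)) / Real.sqrt N := by ring
    rw [hlen] at h5
    exact h5
  constructor
  · unfold Paper.fbar
    have h6 : (Paper.maxMatch B Bb : ℝ) * Real.sqrt N
        < 2 * ((B.length : ℝ) + (Bb.length : ℝ)) := (lt_div_iff₀ hsq).mp hmm
    have h7 : 2 * (Paper.maxMatch B Bb : ℝ) / ((B.length : ℝ) + (Bb.length : ℝ))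
        < 4 / Real.sqrt N := by
      rw [div_lt_div_iff₀ hden hsq]
      nlinarith [h6, hsq]
    linarith
  · have h6 : (Paper.maxApproxMatch B Bb : ℝ) * Real.sqrt N
        < 6 * ((B.length : ℝ) + (Bb.length : ℝ)) := (lt_div_iff₀ hsq).mp hma
    have h7 : 2 * (Paper.maxApproxMatch B Bb : ℝ) / ((B.length : ℝ) + (Bb.length : ℝ))
        < 12 / Real.sqrt N := by
      rw [div_lt_div_iff₀ hden hsq]
      nlinarith [h6, hsq]
    unfold Paper.ftilde
    calc 1 - 12 / Real.sqrt N
        < 1 - 2 * (Paper.maxApproxMatch B Bb : ℝ) / ((B.length : ℝ) + (Bb.length : ℝ)) := by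
          linarith
    _ ≤ _ := le_max_right _ _
end

section
/- Let α ∈ (0, 1/7), let q, l, R be positive integers with l ≥ 2, let Σ be an alphabet containing two distinguished symbols b and e, and let B_j and B_k be strings over Σ, each of length q, such that f̄(A, Ā) > α for any strings A and Ā of at least q/R consecutive symbols from B_j and B_k respectively. Then for any p_1, p_2 ∈ {0, 1, …, q−1} and any strings D and D̄ of at least q·l/R consecutive symbols from b^{q−p_1}(B_j)^{l−1}e^{p_1} and b^{q−p_2}(B_k)^{l−1}e^{p_2} respectively, we have f̄(D, D̄) > α − 2/R − 4R/l. -/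
open MeasureTheory

section Helpers
open Paper
variable {σ : Type*}
open List

instance instTransRel2 : IsTrans (ℕ × ℕ) (fun p q => p.1 < q.1 ∧ p.2 < q.2) :=
  ⟨fun _ _ _ h1 h2 => ⟨h1.1.trans h2.1, h1.2.trans h2.2⟩⟩

lemma chain2_pairwise {l : List (ℕ × ℕ)}
    (hc : l.Chain' (fun p q => p.1 < q.1 ∧ p.2 < q.2)) :
    l.Pairwise (fun p q => p.1 < q.1 ∧ p.2 < q.2) :=
  List.isChain_iff_pairwise.mp hc

lemma pairwise_chain2 {l : List (ℕ × ℕ)}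
    (hc : l.Pairwise (fun p q => p.1 < q.1 ∧ p.2 < q.2)) :
    l.Chain' (fun p q => p.1 < q.1 ∧ p.2 < q.2) :=
  List.isChain_iff_pairwise.mpr hc

lemma mem_of_getLast?_eq_some {α : Type*} {l : List α} {a : α}
    (h : l.getLast? = some a) : a ∈ l := by
  have : a ∈ l.reverse.head? := by rw [List.head?_reverse]; exact h
  simpa using List.mem_of_mem_head? this

lemma nodup_length_le_card (l : List ℕ) (h : l.Nodup) (F : Finset ℕ)
    (hm : ∀ x ∈ l, x ∈ F) : l.length ≤ F.card := by
  rw [← List.toFinset_card_of_nodup h]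
  exact Finset.card_le_card (fun x hx => hm x (List.mem_toFinset.mp hx))

lemma nodup_fst {l : List (ℕ × ℕ)}
    (hc : l.Chain' (fun p q => p.1 < q.1 ∧ p.2 < q.2)) : (l.map Prod.fst).Nodup := by
  refine List.pairwise_map.mpr ?_
  exact (chain2_pairwise hc).imp (fun h => Nat.ne_of_lt h.1)

lemma nodup_snd {l : List (ℕ × ℕ)}
    (hc : l.Chain' (fun p q => p.1 < q.1 ∧ p.2 < q.2)) : (l.map Prod.snd).Nodup := by
  refine List.pairwise_map.mpr ?_
  exact (chain2_pairwise hc).imp (fun h => Nat.ne_of_lt h.2)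

lemma length_le_of_fst_lt {l : List (ℕ × ℕ)}
    (hc : l.Chain' (fun p q => p.1 < q.1 ∧ p.2 < q.2)) {n : ℕ}
    (hb : ∀ p ∈ l, p.1 < n) : l.length ≤ n := by
  have h := nodup_length_le_card (l.map Prod.fst) (nodup_fst hc) (Finset.range n) ?_
  · simpa using h
  · intro x hx
    obtain ⟨p, hp, rfl⟩ := List.mem_map.mp hx
    exact Finset.mem_range.mpr (hb p hp)

lemma length_le_of_snd_lt {l : List (ℕ × ℕ)}
    (hc : l.Chain' (fun p q => p.1 < q.1 ∧ p.2 < q.2)) {n : ℕ}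
    (hb : ∀ p ∈ l, p.2 < n) : l.length ≤ n := by
  have h := nodup_length_le_card (l.map Prod.snd) (nodup_snd hc) (Finset.range n) ?_
  · simpa using h
  · intro x hx
    obtain ⟨p, hp, rfl⟩ := List.mem_map.mp hx
    exact Finset.mem_range.mpr (hb p hp)

lemma isMatch_length_le_left {a b : List σ} {I : List (ℕ × ℕ)}
    (h : IsMatch a b I) : I.length ≤ a.length :=
  length_le_of_fst_lt h.1 (fun p hp => (h.2 p hp).1)

lemma isMatch_length_le_right {a b : List σ} {I : List (ℕ × ℕ)}
    (h : IsMatch a b I) : I.length ≤ b.length :=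
  length_le_of_snd_lt h.1 (fun p hp => (h.2 p hp).2.1)

lemma matchSet_nonempty (a b : List σ) :
    {r | ∃ I, IsMatch a b I ∧ I.length = r}.Nonempty :=
  ⟨0, [], ⟨List.isChain_nil, by simp⟩, rfl⟩

lemma matchSet_bddAbove (a b : List σ) :
    BddAbove {r | ∃ I, IsMatch a b I ∧ I.length = r} := by
  refine ⟨a.length, fun r hr => ?_⟩
  obtain ⟨I, hI, rfl⟩ := hr
  exact isMatch_length_le_left hI

lemma exists_isMatch_maxMatch (a b : List σ) :
    ∃ I, IsMatch a b I ∧ I.length = maxMatch a b :=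
  Nat.sSup_mem (matchSet_nonempty a b) (matchSet_bddAbove a b)

lemma le_maxMatch {a b : List σ} {I : List (ℕ × ℕ)} (h : IsMatch a b I) :
    I.length ≤ maxMatch a b :=
  le_csSup (matchSet_bddAbove a b) ⟨I, h, rfl⟩

lemma maxMatch_le_left (a b : List σ) : maxMatch a b ≤ a.length := by
  obtain ⟨I, hI, hlen⟩ := exists_isMatch_maxMatch a b
  exact hlen ▸ isMatch_length_le_left hI

lemma maxMatch_le_right (a b : List σ) : maxMatch a b ≤ b.length := by
  obtain ⟨I, hI, hlen⟩ := exists_isMatch_maxMatch a b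
  exact hlen ▸ isMatch_length_le_right hI

lemma fbar_nonneg (a b : List σ) : 0 ≤ fbar a b := by
  unfold fbar
  rcases Nat.eq_zero_or_pos (a.length + b.length) with h | h
  · have h1 : maxMatch a b = 0 := by
      have := maxMatch_le_left a b; omega
    rw [h1]
    norm_num
  · have h1 : (maxMatch a b : ℝ) ≤ a.length := by exact_mod_cast maxMatch_le_left a b
    have h2 : (maxMatch a b : ℝ) ≤ b.length := by exact_mod_cast maxMatch_le_right a b
    have h3 : (0:ℝ) < (a.length : ℝ) + b.length := by exact_mod_cast h
    rw [sub_nonneg, div_le_one h3]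
    linarith

lemma maxMatch_lt_of_fbar_gt {α : ℝ} {a b : List σ}
    (hlen : 0 < (a.length : ℝ) + b.length) (h : α < fbar a b) :
    (maxMatch a b : ℝ) < (1 - α) / 2 * ((a.length : ℝ) + b.length) := by
  unfold fbar at h
  have h2 : 2 * (maxMatch a b : ℝ) / ((a.length : ℝ) + b.length) < 1 - α := by linarith
  rw [div_lt_iff₀ hlen] at h2
  nlinarith

lemma rep_length (w : List σ) (t : ℕ) : (rep w t).length = t * w.length := by
  simp [rep]

lemma rep_getElem? (w : List σ) (t x : ℕ) (hx : x < w.length * t) :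
    (rep w t)[x]? = w[x % w.length]? := by
  induction t generalizing x with
  | zero => exact absurd hx (by simp)
  | succ t ih =>
    have hrep : rep w (t+1) = w ++ rep w t := by
      simp [rep, List.replicate_succ]
    rw [hrep]
    rcases Nat.lt_or_ge x w.length with h | h
    · rw [List.getElem?_append_left h, Nat.mod_eq_of_lt h]
    · rw [List.getElem?_append_right h]
      have hms : w.length * (t + 1) = w.length * t + w.length := by ring
      have hw : 0 < w.length := by
        rcases Nat.eq_zero_or_pos w.length with h0 | h0
        · rw [h0] at hx; simp at hx
        · exact h0
      have h1 : x - w.length < w.length * t := by omega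
      rw [ih _ h1]
      congr 1
      conv_rhs => rw [show x = (x - w.length) + w.length by omega]
      rw [Nat.add_mod_right]

lemma mod_lt_mod_of_div_eq {a b q : ℕ} (h : a < b) (hd : a / q = b / q) :
    a % q < b % q := by
  by_contra hle
  push_neg at hle
  have : b ≤ a := by
    calc b = q * (b / q) + b % q := (Nat.div_add_mod b q).symm
    _ ≤ q * (a / q) + a % q := by rw [hd]; exact Nat.add_le_add_left hle _
    _ = a := Nat.div_add_mod a q
  omega

lemma cast_sub_mod_eq {a b q : ℕ} (hd : a / q = b / q) :
    (a : ℝ) - b = ((a % q : ℕ) : ℝ) - ((b % q : ℕ) : ℝ) := by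
  have h1 : (q * (a / q) + a % q : ℕ) = a := Nat.div_add_mod a q
  have h2 : (q * (b / q) + b % q : ℕ) = b := Nat.div_add_mod b q
  rw [hd] at h1
  have h1' : (q : ℝ) * ((b / q : ℕ) : ℝ) + ((a % q : ℕ) : ℝ) = a := by exact_mod_cast h1
  have h2' : (q : ℝ) * ((b / q : ℕ) : ℝ) + ((b % q : ℕ) : ℝ) = b := by exact_mod_cast h2
  linarith

lemma div_le_div_add_sub_div_add_one {a b q : ℕ} (h : b ≤ a) :
    a / q ≤ b / q + (a - b) / q + 1 := by
  rcases Nat.eq_zero_or_pos q with rfl | hq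
  · simp
  · have heq : b + (a - b) = a := by omega
    have := Nat.add_div (a := b) (b := a - b) hq
    rw [heq] at this
    rw [this]
    split <;> omega

lemma countP_le_add {α : Type*} (l : List α) (p pq pr : α → Bool)
    (h : ∀ x ∈ l, p x = true → pq x = true ∨ pr x = true) :
    l.countP p ≤ l.countP pq + l.countP pr := by
  induction l with
  | nil => simp
  | cons a l ih =>
    have ih' := ih (fun x hx => h x (by simp [hx]))
    rw [List.countP_cons, List.countP_cons, List.countP_cons]
    rcases Bool.eq_false_or_eq_true (p a) with hpa | hpa
    swap
    · rw [if_neg (show ¬ (p a = true) by simp [hpa])]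
      split <;> split <;> omega
    · rw [if_pos hpa]
      rcases h a (by simp) hpa with h1 | h1
      · rw [if_pos h1]; split <;> omega
      · rw [if_pos h1]; split <;> omega

lemma mem_bounds {l : List (ℕ × ℕ)}
    (hc : l.Chain' (fun p q => p.1 < q.1 ∧ p.2 < q.2)) {x y : ℕ × ℕ}
    (hx : l.head? = some x) (hy : l.getLast? = some y) :
    ∀ p ∈ l, x.1 ≤ p.1 ∧ x.2 ≤ p.2 ∧ p.1 ≤ y.1 ∧ p.2 ≤ y.2 := by
  have hp := chain2_pairwise hc
  intro p hmem
  obtain ⟨t, rfl⟩ : ∃ t, l = x :: t := by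
    cases l with
    | nil => simp at hx
    | cons a t =>
      have : a = x := by simpa using hx
      exact ⟨t, by rw [this]⟩
  refine ⟨?_, ?_, ?_⟩
  · rcases List.mem_cons.mp hmem with rfl | hmem'
    · exact le_refl _
    · exact le_of_lt ((List.pairwise_cons.mp hp).1 p hmem').1
  · rcases List.mem_cons.mp hmem with rfl | hmem'
    · exact le_refl _
    · exact le_of_lt ((List.pairwise_cons.mp hp).1 p hmem').2
  · have hyr : (x :: t).reverse.head? = some y := by rw [List.head?_reverse]; exact hy
    have hpr : (x :: t).reverse.Pairwise (fun a b => b.1 < a.1 ∧ b.2 < a.2) :=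
      List.pairwise_reverse.mpr hp
    obtain ⟨t', ht'⟩ : ∃ t', (x :: t).reverse = y :: t' := by
      cases hrev : (x :: t).reverse with
      | nil => rw [hrev] at hyr; simp at hyr
      | cons a t' =>
        rw [hrev] at hyr
        have : a = y := by simpa using hyr
        exact ⟨t', by rw [this]⟩
    have hmemr : p ∈ (x :: t).reverse := List.mem_reverse.mpr hmem
    rw [ht'] at hmemr hpr
    rcases List.mem_cons.mp hmemr with rfl | hmem'
    · exact ⟨le_refl _, le_refl _⟩
    · have := (List.pairwise_cons.mp hpr).1 p hmem'
      exact ⟨le_of_lt this.1, le_of_lt this.2⟩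

end Helpers

section Chunk
open Paper List
variable {σ : Type*}

/-- Bound on a match confined to a single pair of copies of `Bj`/`Bk`. -/
lemma chunkBound (α : ℝ) (hα1 : α ≤ 1) (q R : ℕ) (hq : 0 < q) (hR : 0 < R)
    (Bj Bk : List σ) (hBj : Bj.length = q) (hBk : Bk.length = q)
    (hsep : ∀ A Ab : List σ, A <:+: Bj → Ab <:+: Bk →
      (q : ℝ) / R ≤ A.length → (q : ℝ) / R ≤ Ab.length → α < fbar A Ab)
    (J : List (ℕ × ℕ)) (hc : J.Chain' (fun p q => p.1 < q.1 ∧ p.2 < q.2))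
    (hb : ∀ p ∈ J, p.1 < q ∧ p.2 < q)
    (hmem : ∀ p ∈ J, Bj[p.1]? = Bk[p.2]?)
    (x y : ℕ × ℕ) (hx : J.head? = some x) (hy : J.getLast? = some y) :
    (J.length : ℝ) ≤ (1 - α) / 2 * (((y.1 : ℝ) - x.1 + 1) + ((y.2 : ℝ) - x.2 + 1))
      + (q : ℝ) / R := by
  have hbd := mem_bounds hc hx hy
  have hxJ : x ∈ J := List.mem_of_mem_head? (by rw [hx]; rfl)
  have hyJ : y ∈ J := List.mem_of_getLast? hy
  have hy1q : y.1 < q := (hb y hyJ).1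
  have hy2q : y.2 < q := (hb y hyJ).2
  have hx1y1 : x.1 ≤ y.1 := (hbd y hyJ).1
  have hx2y2 : x.2 ≤ y.2 := (hbd y hyJ).2.1
  set A : List σ := (Bj.drop x.1).take (y.1 - x.1 + 1) with hA
  set Ab : List σ := (Bk.drop x.2).take (y.2 - x.2 + 1) with hAb
  have hAlen : A.length = y.1 - x.1 + 1 := by
    rw [hA, List.length_take, List.length_drop, hBj]; omega
  have hAblen : Ab.length = y.2 - x.2 + 1 := by
    rw [hAb, List.length_take, List.length_drop, hBk]; omega
  have hAinf : A <:+: Bj := (List.take_prefix _ _).isInfix.trans (List.drop_suffix _ _).isInfix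
  have hAbinf : Ab <:+: Bk := (List.take_prefix _ _).isInfix.trans (List.drop_suffix _ _).isInfix
  have hAget : ∀ i, x.1 ≤ i → i ≤ y.1 → A[i - x.1]? = Bj[i]? := by
    intro i h1 h2
    rw [hA, List.getElem?_take, if_pos (by omega), List.getElem?_drop]
    congr 1; omega
  have hAbget : ∀ i, x.2 ≤ i → i ≤ y.2 → Ab[i - x.2]? = Bk[i]? := by
    intro i h1 h2
    rw [hAb, List.getElem?_take, if_pos (by omega), List.getElem?_drop]
    congr 1; omega
  set J' : List (ℕ × ℕ) := J.map (fun p => (p.1 - x.1, p.2 - x.2)) with hJ'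
  have hJ'match : IsMatch A Ab J' := by
    constructor
    · refine pairwise_chain2 ?_
      rw [hJ']
      refine List.pairwise_map.mpr ?_
      refine (chain2_pairwise hc).imp_of_mem ?_
      intro p p' hp hp' hrel
      have h1 := hbd p hp
      have h2 := hbd p' hp'
      exact ⟨by simp; omega, by simp; omega⟩
    · intro p' hp'
      rw [hJ'] at hp'
      obtain ⟨p, hp, rfl⟩ := List.mem_map.mp hp'
      have h1 := hbd p hp
      refine ⟨by simp [hAlen]; omega, by simp [hAblen]; omega, ?_⟩
      simp only
      rw [hAget p.1 h1.1 h1.2.2.1, hAbget p.2 h1.2.1 h1.2.2.2]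
      exact hmem p hp
  have hJlen : J.length = J'.length := by rw [hJ', List.length_map]
  have hspan1 : ((A.length : ℕ) : ℝ) = (y.1 : ℝ) - x.1 + 1 := by
    rw [hAlen]; push_cast [Nat.cast_sub hx1y1]; ring
  have hspan2 : ((Ab.length : ℕ) : ℝ) = (y.2 : ℝ) - x.2 + 1 := by
    rw [hAblen]; push_cast [Nat.cast_sub hx2y2]; ring
  by_cases hlong : (q : ℝ) / R ≤ A.length ∧ (q : ℝ) / R ≤ Ab.length
  · -- long case: use the separation hypothesis
    have hpos : 0 < (A.length : ℝ) + Ab.length := by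
      have : (0:ℝ) < A.length := by rw [hAlen]; positivity
      have h2 : (0:ℝ) ≤ Ab.length := by positivity
      linarith
    have hfb := hsep A Ab hAinf hAbinf hlong.1 hlong.2
    have hlt := maxMatch_lt_of_fbar_gt hpos hfb
    have hle : (J'.length : ℕ) ≤ maxMatch A Ab := le_maxMatch hJ'match
    have hle' : (J.length : ℝ) ≤ (maxMatch A Ab : ℝ) := by
      rw [hJlen]; exact_mod_cast hle
    have hqR : (0:ℝ) ≤ (q:ℝ)/R := by positivity
    rw [← hspan1, ← hspan2]
    linarith
  · -- short case
    have h1 : J'.length ≤ A.length := isMatch_length_le_left hJ'match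
    have h2 : J'.length ≤ Ab.length := isMatch_length_le_right hJ'match
    have hshort : (J.length : ℝ) ≤ (q : ℝ) / R := by
      rcases not_and_or.mp hlong with h | h
      · push_neg at h
        have : (J.length : ℝ) ≤ (A.length : ℝ) := by rw [hJlen]; exact_mod_cast h1
        linarith
      · push_neg at h
        have : (J.length : ℝ) ≤ (Ab.length : ℝ) := by rw [hJlen]; exact_mod_cast h2
        linarith
    have hs1 : (0:ℝ) ≤ (y.1 : ℝ) - x.1 + 1 := by
      rw [← hspan1]; positivity
    have hs2 : (0:ℝ) ≤ (y.2 : ℝ) - x.2 + 1 := by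
      rw [← hspan2]; positivity
    nlinarith
end Chunk

section Induct
open Paper List
variable {σ : Type*}

/-- Staircase induction: bound for a match living in the interiors of the two
concatenations, in relative coordinates. -/
lemma mainInd (α : ℝ) (hα1 : α ≤ 1) (q R : ℕ) (hq : 0 < q) (hR : 0 < R)
    (Bj Bk : List σ) (hBj : Bj.length = q) (hBk : Bk.length = q)
    (hsep : ∀ A Ab : List σ, A <:+: Bj → Ab <:+: Bk →
      (q : ℝ) / R ≤ A.length → (q : ℝ) / R ≤ Ab.length → α < fbar A Ab) :
    ∀ N (K : List (ℕ × ℕ)), K.length ≤ N →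
      K.Chain' (fun p q => p.1 < q.1 ∧ p.2 < q.2) →
      (∀ p ∈ K, Bj[p.1 % q]? = Bk[p.2 % q]?) →
      ∀ x y, K.head? = some x → K.getLast? = some y →
      (K.length : ℝ) ≤ (1 - α) / 2 * (((y.1 : ℝ) - x.1 + 1) + ((y.2 : ℝ) - x.2 + 1))
        + (q : ℝ) / R * ((((y.1 / q : ℕ) : ℝ) - ((x.1 / q : ℕ) : ℝ))
            + (((y.2 / q : ℕ) : ℝ) - ((x.2 / q : ℕ) : ℝ)) + 1) := by
  intro N
  induction N with
  | zero =>
    intro K hlen hc hmem x y hx hy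
    cases K with
    | nil => simp at hx
    | cons a t => simp at hlen
  | succ N ih =>
    intro K hlen hc hmem x y hx hy
    have hyK : y ∈ K := List.mem_of_getLast? hy
    have hbdK := mem_bounds hc hx hy
    set pred : ℕ × ℕ → Bool :=
      fun p => (p.1 / q == x.1 / q) && (p.2 / q == x.2 / q) with hpred
    have hK : K.takeWhile pred ++ K.dropWhile pred = K := List.takeWhile_append_dropWhile (p := pred) (l := K)
    set C := K.takeWhile pred with hC
    set rest := K.dropWhile pred with hrest
    obtain ⟨tl, hKx⟩ : ∃ tl, K = x :: tl := by
      cases K with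
      | nil => simp at hx
      | cons a t =>
        have : a = x := by simpa using hx
        exact ⟨t, by rw [this]⟩
    have hpredx : pred x = true := by simp [hpred]
    have hChead : C.head? = some x := by
      rw [hC, hKx, List.takeWhile_cons, if_pos hpredx]; rfl
    have hCne : C ≠ [] := by
      intro h; rw [h] at hChead; simp at hChead
    have hcK : (C ++ rest).Chain' (fun p q => p.1 < q.1 ∧ p.2 < q.2) := by
      rw [hK]; exact hc
    obtain ⟨hcC, hcRest, hlink⟩ := List.isChain_append.mp hcK
    have memC : ∀ p ∈ C, p ∈ K := by
      intro p hp; rw [← hK]; exact List.mem_append_left _ hp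
    have memRest : ∀ p ∈ rest, p ∈ K := by
      intro p hp; rw [← hK]; exact List.mem_append_right _ hp
    have pC : ∀ p ∈ C, p.1 / q = x.1 / q ∧ p.2 / q = x.2 / q := by
      intro p hp
      have := List.mem_takeWhile_imp (hC ▸ hp)
      simpa [hpred] using this
    set cLast := C.getLast hCne with hcLast
    have hCy : C.getLast? = some cLast := List.getLast?_eq_getLast _
    have hcLC : cLast ∈ C := List.getLast_mem _
    have hcLK : cLast ∈ K := memC _ hcLC
    have hbdC := mem_bounds hcC hChead hCy
    -- chunk bound for C via offsets
    set C' : List (ℕ × ℕ) := C.map (fun p => (p.1 % q, p.2 % q)) with hC'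
    have hcC' : C'.Chain' (fun p q => p.1 < q.1 ∧ p.2 < q.2) := by
      refine pairwise_chain2 ?_
      rw [hC']
      refine List.pairwise_map.mpr ?_
      refine (chain2_pairwise hcC).imp_of_mem ?_
      intro p p' hp hp' hrel
      constructor
      · exact mod_lt_mod_of_div_eq hrel.1 ((pC p hp).1.trans (pC p' hp').1.symm)
      · exact mod_lt_mod_of_div_eq hrel.2 ((pC p hp).2.trans (pC p' hp').2.symm)
    have hbC' : ∀ r ∈ C', r.1 < q ∧ r.2 < q := by
      intro r hr
      rw [hC'] at hr
      obtain ⟨p, hp, rfl⟩ := List.mem_map.mp hr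
      exact ⟨Nat.mod_lt _ hq, Nat.mod_lt _ hq⟩
    have hmemC' : ∀ r ∈ C', Bj[r.1]? = Bk[r.2]? := by
      intro r hr
      rw [hC'] at hr
      obtain ⟨p, hp, rfl⟩ := List.mem_map.mp hr
      exact hmem p (memC p hp)
    have hC'head : C'.head? = some (x.1 % q, x.2 % q) := by
      rw [hC', List.head?_map, hChead]; rfl
    have hC'last : C'.getLast? = some (cLast.1 % q, cLast.2 % q) := by
      rw [hC', List.getLast?_map, hCy]; rfl
    have hchunk := chunkBound α hα1 q R hq hR Bj Bk hBj hBk hsep C' hcC' hbC' hmemC'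
      (x.1 % q, x.2 % q) (cLast.1 % q, cLast.2 % q) hC'head hC'last
    have hC'len : C'.length = C.length := by rw [hC', List.length_map]
    have e1 : ((cLast.1 : ℝ)) - x.1 = ((cLast.1 % q : ℕ) : ℝ) - ((x.1 % q : ℕ) : ℝ) :=
      cast_sub_mod_eq ((pC cLast hcLC).1)
    have e2 : ((cLast.2 : ℝ)) - x.2 = ((cLast.2 % q : ℕ) : ℝ) - ((x.2 % q : ℕ) : ℝ) :=
      cast_sub_mod_eq ((pC cLast hcLC).2)
    have hCspan : (C.length : ℝ) ≤ (1 - α) / 2 *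
        (((cLast.1 : ℝ) - x.1 + 1) + ((cLast.2 : ℝ) - x.2 + 1)) + (q : ℝ) / R := by
      rw [hC'len] at hchunk
      simp only at hchunk
      rw [e1, e2]
      linarith
    have hqR : (0 : ℝ) ≤ (q : ℝ) / R := by positivity
    have hα2 : (0 : ℝ) ≤ (1 - α) / 2 := by linarith
    by_cases hre : rest = []
    · -- K = C
      have hKC : K = C := by rw [← hK, hre, List.append_nil]
      have hyc : y = cLast := by
        rw [hKC, hCy] at hy
        exact (Option.some.inj hy).symm
      have hd1 : x.1 / q ≤ y.1 / q := Nat.div_le_div_right (hbdK y hyK).1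
      have hd2 : x.2 / q ≤ y.2 / q := Nat.div_le_div_right (hbdK y hyK).2.1
      have hd1' : ((x.1 / q : ℕ) : ℝ) ≤ ((y.1 / q : ℕ) : ℝ) := by exact_mod_cast hd1
      have hd2' : ((x.2 / q : ℕ) : ℝ) ≤ ((y.2 / q : ℕ) : ℝ) := by exact_mod_cast hd2
      have hmul : (q : ℝ) / R * 1 ≤ (q : ℝ) / R *
          ((((y.1 / q : ℕ) : ℝ) - ((x.1 / q : ℕ) : ℝ))
            + (((y.2 / q : ℕ) : ℝ) - ((x.2 / q : ℕ) : ℝ)) + 1) := by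
        apply mul_le_mul_of_nonneg_left _ hqR
        linarith
      rw [hKC, hyc]
      rw [hyc] at hmul
      linarith
    · -- recursive case
      have hrne := hre
      set r := rest.head hrne with hr
      have hrhead : rest.head? = some r := List.head?_eq_head _
      have hrK : r ∈ K := memRest _ (List.head_mem _)
      have hprF : pred r = false := by
        have h0 := List.head?_dropWhile_not pred K
        rw [← hrest, hrhead] at h0
        exact h0
      have hlinkCR : cLast.1 < r.1 ∧ cLast.2 < r.2 :=
        hlink cLast (by rw [hCy]; rfl) r (by rw [hrhead]; rfl)
      have hylast : rest.getLast? = some y := by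
        have h1 : rest.getLast? = some (rest.getLast hrne) := List.getLast?_eq_getLast _
        rw [← hK, List.getLast?_append, h1] at hy
        simp at hy
        rw [h1, hy]
      have hKlen : K.length = C.length + rest.length := by
        rw [← hK, List.length_append]
      have hlenC : 1 ≤ C.length := by
        cases hCc : C with
        | nil => exact absurd hCc hCne
        | cons a t => simp
      have hrlen : rest.length ≤ N := by omega
      have IH := ih rest hrlen hcRest (fun p hp => hmem p (memRest p hp)) r y hrhead hylast
      -- ordering facts
      have hbx := hbdK r hrK
      have hby := hbdK y hyK
      have hcl := hbdK cLast hcLK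
      have hdvF : ¬(r.1 / q = x.1 / q ∧ r.2 / q = x.2 / q) := by
        intro hcon
        rw [hpred] at hprF
        simp only [Bool.and_eq_false_iff, beq_eq_false_iff_ne, ne_eq] at hprF
        tauto
      have hdm1 : x.1 / q ≤ r.1 / q := Nat.div_le_div_right hbx.1
      have hdm2 : x.2 / q ≤ r.2 / q := Nat.div_le_div_right hbx.2.1
      have hdm3 : r.1 / q ≤ y.1 / q := Nat.div_le_div_right (Nat.le_of_lt_succ (Nat.lt_succ_of_le hbx.2.2.1))
      have hD : x.1 / q + x.2 / q + 1 ≤ r.1 / q + r.2 / q := by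
        rcases Nat.eq_or_lt_of_le hdm1 with h1 | h1
        · rcases Nat.eq_or_lt_of_le hdm2 with h2 | h2
          · exact absurd ⟨h1.symm, h2.symm⟩ hdvF
          · omega
        · omega
      have hD' : ((x.1 / q : ℕ) : ℝ) + ((x.2 / q : ℕ) : ℝ) + 1
          ≤ ((r.1 / q : ℕ) : ℝ) + ((r.2 / q : ℕ) : ℝ) := by exact_mod_cast hD
      -- span combination
      have hsp1 : (cLast.1 : ℝ) + 1 ≤ (r.1 : ℝ) := by exact_mod_cast hlinkCR.1
      have hsp2 : (cLast.2 : ℝ) + 1 ≤ (r.2 : ℝ) := by exact_mod_cast hlinkCR.2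
      have hmulSpan : (1 - α) / 2 *
          ((((cLast.1 : ℝ) - x.1 + 1) + ((cLast.2 : ℝ) - x.2 + 1))
            + (((y.1 : ℝ) - r.1 + 1) + ((y.2 : ℝ) - r.2 + 1)))
          ≤ (1 - α) / 2 * (((y.1 : ℝ) - x.1 + 1) + ((y.2 : ℝ) - x.2 + 1)) := by
        apply mul_le_mul_of_nonneg_left _ hα2
        linarith
      have hmulLab : (q : ℝ) / R * (1 +
          ((((y.1 / q : ℕ) : ℝ) - ((r.1 / q : ℕ) : ℝ))
            + (((y.2 / q : ℕ) : ℝ) - ((r.2 / q : ℕ) : ℝ)) + 1))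
          ≤ (q : ℝ) / R * ((((y.1 / q : ℕ) : ℝ) - ((x.1 / q : ℕ) : ℝ))
            + (((y.2 / q : ℕ) : ℝ) - ((x.2 / q : ℕ) : ℝ)) + 1) := by
        apply mul_le_mul_of_nonneg_left _ hqR
        linarith
      have hKlen' : (K.length : ℝ) = (C.length : ℝ) + (rest.length : ℝ) := by
        exact_mod_cast hKlen
      have expand1 : (q : ℝ) / R * (1 +
          ((((y.1 / q : ℕ) : ℝ) - ((r.1 / q : ℕ) : ℝ))
            + (((y.2 / q : ℕ) : ℝ) - ((r.2 / q : ℕ) : ℝ)) + 1))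
          = (q : ℝ) / R + (q : ℝ) / R *
          ((((y.1 / q : ℕ) : ℝ) - ((r.1 / q : ℕ) : ℝ))
            + (((y.2 / q : ℕ) : ℝ) - ((r.2 / q : ℕ) : ℝ)) + 1) := by ring
      have expand2 : (1 - α) / 2 *
          ((((cLast.1 : ℝ) - x.1 + 1) + ((cLast.2 : ℝ) - x.2 + 1))
            + (((y.1 : ℝ) - r.1 + 1) + ((y.2 : ℝ) - r.2 + 1)))
          = (1 - α) / 2 * (((cLast.1 : ℝ) - x.1 + 1) + ((cLast.2 : ℝ) - x.2 + 1))
            + (1 - α) / 2 * (((y.1 : ℝ) - r.1 + 1) + ((y.2 : ℝ) - r.2 + 1)) := by ring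
      linarith
end Induct

open Paper List

set_option maxHeartbeats 1600000 in
/-- Let `0 < α < 1/7`, let `q, l, R` be positive integers with `l ≥ 2`,
let `b, e` be two distinguished symbols, and let `Bj, Bk` be strings of length `q` such
that `f̄(A,Ā) > α` for all consecutive substrings `A` of `Bj` and `Ā` of `Bk` of length at
least `q/R`. Then for any `p₁, p₂ ∈ {0,…,q−1}` and any consecutive substrings `D` of
`b^{q−p₁}(Bj)^{l−1}e^{p₁}` and `D̄` of `b^{q−p₂}(Bk)^{l−1}e^{p₂}` of length at least
`q·l/R`, we have `f̄(D,D̄) > α − 2/R − 4R/l`. -/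
theorem statement15 {σ : Type*} (α : ℝ) (hα : 0 < α) (hα' : α < 1/7)
    (q l R : ℕ) (hq : 0 < q) (hl : 2 ≤ l) (hR : 0 < R)
    (b e : σ) (Bj Bk : List σ) (hBj : Bj.length = q) (hBk : Bk.length = q)
    (hsep : ∀ A Ab : List σ, A <:+: Bj → Ab <:+: Bk →
      (q : ℝ) / R ≤ A.length → (q : ℝ) / R ≤ Ab.length → α < fbar A Ab)
    (p₁ p₂ : ℕ) (hp₁ : p₁ < q) (hp₂ : p₂ < q)
    (D Db : List σ)
    (hD : D <:+: (List.replicate (q - p₁) b ++ Paper.rep Bj (l - 1) ++ List.replicate p₁ e))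
    (hDb : Db <:+: (List.replicate (q - p₂) b ++ Paper.rep Bk (l - 1) ++ List.replicate p₂ e))
    (hDlen : ((q * l : ℕ) : ℝ) / R ≤ D.length)
    (hDblen : ((q * l : ℕ) : ℝ) / R ≤ Db.length) :
    α - 2 / R - 4 * R / l < fbar D Db := by
  classical
  have hRpos : (0:ℝ) < R := by exact_mod_cast hR
  have hlpos : (0:ℝ) < l := by
    have : (0:ℕ) < l := by omega
    exact_mod_cast this
  have hqpos : (0:ℝ) < q := by exact_mod_cast hq
  have hα1 : α ≤ 1 := by linarith
  by_cases hcase : α < 2 / (R:ℝ) + 4 * R / l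
  · have h0 := fbar_nonneg D Db
    have h1 : (0:ℝ) ≤ 2 / (R:ℝ) := by positivity
    have h2 : (0:ℝ) ≤ 4 * (R:ℝ) / l := by positivity
    linarith
  push_neg at hcase
  have hR2 : (2:ℝ) ≤ (R:ℝ) := by
    by_contra h
    push_neg at h
    have h4 : (0:ℝ) ≤ 4 * (R:ℝ) / l := by positivity
    have h5 : (1:ℝ) ≤ 2 / (R:ℝ) := by
      rw [le_div_iff₀ hRpos]; linarith
    linarith
  -- basic sizes
  have hqlR : (0:ℝ) < (q:ℝ) * l / R := by positivity
  have hDlen' : (q:ℝ) * l / R ≤ D.length := by push_cast at hDlen; linarith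
  have hDblen' : (q:ℝ) * l / R ≤ Db.length := by push_cast at hDblen; linarith
  have hnpos : (0:ℝ) < D.length := lt_of_lt_of_le hqlR hDlen'
  have hmpos : (0:ℝ) < Db.length := lt_of_lt_of_le hqlR hDblen'
  have hnm : (0:ℝ) < (D.length:ℝ) + Db.length := by linarith
  -- the maximal match
  obtain ⟨I₀, hI₀, hI₀len⟩ := exists_isMatch_maxMatch D Db
  obtain ⟨hch, hval⟩ := hI₀
  obtain ⟨s, t, hst⟩ := hD
  obtain ⟨s2, t2, hst2⟩ := hDb
  set u := s.length with hu
  set v := s2.length with hv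
  have hcommq : q * (l-1) = (l-1) * q := Nat.mul_comm _ _
  -- total lengths
  have htot1 : u + D.length + t.length = (q - p₁) + (l-1)*q + p₁ := by
    have h0 := congrArg List.length hst
    simp only [List.length_append, List.length_replicate, rep_length, hBj] at h0
    omega
  have htot2 : v + Db.length + t2.length = (q - p₂) + (l-1)*q + p₂ := by
    have h0 := congrArg List.length hst2
    simp only [List.length_append, List.length_replicate, rep_length, hBk] at h0
    omega
  -- lookup of D inside the big string
  have hget1 : ∀ i, i < D.length →
      (List.replicate (q - p₁) b ++ Paper.rep Bj (l - 1) ++ List.replicate p₁ e)[u + i]?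
        = D[i]? := by
    intro i hi
    rw [← hst, List.append_assoc]
    rw [List.getElem?_append_right (by omega : s.length ≤ u + i)]
    have h1 : u + i - s.length = i := by omega
    rw [h1, List.getElem?_append_left hi]
  have hget2 : ∀ i, i < Db.length →
      (List.replicate (q - p₂) b ++ Paper.rep Bk (l - 1) ++ List.replicate p₂ e)[v + i]?
        = Db[i]? := by
    intro i hi
    rw [← hst2, List.append_assoc]
    rw [List.getElem?_append_right (by omega : s2.length ≤ v + i)]
    have h1 : v + i - s2.length = i := by omega
    rw [h1, List.getElem?_append_left hi]
  -- lookup inside the middle portion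
  have hmid1 : ∀ g, q - p₁ ≤ g → g < (q - p₁) + (l-1)*q →
      (List.replicate (q - p₁) b ++ Paper.rep Bj (l - 1) ++ List.replicate p₁ e)[g]?
        = Bj[(g - (q - p₁)) % q]? := by
    intro g h1 h2
    rw [List.getElem?_append_left
      (by simp only [List.length_append, List.length_replicate, rep_length, hBj]; omega)]
    rw [List.getElem?_append_right (by simp only [List.length_replicate]; omega)]
    simp only [List.length_replicate]
    rw [rep_getElem? Bj (l-1) _ (by rw [hBj]; omega), hBj]
  have hmid2 : ∀ g, q - p₂ ≤ g → g < (q - p₂) + (l-1)*q →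
      (List.replicate (q - p₂) b ++ Paper.rep Bk (l - 1) ++ List.replicate p₂ e)[g]?
        = Bk[(g - (q - p₂)) % q]? := by
    intro g h1 h2
    rw [List.getElem?_append_left
      (by simp only [List.length_append, List.length_replicate, rep_length, hBk]; omega)]
    rw [List.getElem?_append_right (by simp only [List.length_replicate]; omega)]
    simp only [List.length_replicate]
    rw [rep_getElem? Bk (l-1) _ (by rw [hBk]; omega), hBk]
  -- frame predicates
  set P1 : ℕ × ℕ → Bool :=
    fun p => decide (q - p₁ ≤ u + p.1 ∧ u + p.1 < (q - p₁) + (l-1)*q) with hP1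
  set P2 : ℕ × ℕ → Bool :=
    fun p => decide (q - p₂ ≤ v + p.2 ∧ v + p.2 < (q - p₂) + (l-1)*q) with hP2
  set P : ℕ × ℕ → Bool := fun p => P1 p && P2 p with hP
  set I' := I₀.filter P with hI'
  -- counting the frame pairs
  have hsplit : I₀.length ≤ I'.length
      + (I₀.filter (fun p => !P1 p)).length + (I₀.filter (fun p => !P2 p)).length := by
    have h0 := List.length_eq_countP_add_countP P (l := I₀)
    have h1 : I₀.countP (fun a => decide ¬(P a = true))
        ≤ I₀.countP (fun p => !P1 p) + I₀.countP (fun p => !P2 p) := by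
      apply countP_le_add
      intro x hx hxP
      have hPx : ¬ (P x = true) := of_decide_eq_true hxP
      have hPx' : P1 x = false ∨ P2 x = false := by
        rcases Bool.eq_false_or_eq_true (P1 x) with h | h
        · rcases Bool.eq_false_or_eq_true (P2 x) with h2 | h2
          · exact absurd (by rw [hP]; simp [h, h2]) hPx
          · exact Or.inr h2
        · exact Or.inl h
      rcases hPx' with h | h
      · left; rw [h]; rfl
      · right; rw [h]; rfl
    rw [hI', ← List.countP_eq_length_filter, ← List.countP_eq_length_filter,
      ← List.countP_eq_length_filter]
    omega
  have hbad1 : (I₀.filter (fun p => !P1 p)).length ≤ q := by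
    set lb := (I₀.filter (fun p => !P1 p)).map (fun p : ℕ × ℕ => u + p.1) with hlb
    have hlblen : lb.length = (I₀.filter (fun p => !P1 p)).length := by
      rw [hlb, List.length_map]
    have hnd : lb.Nodup := by
      have h1 : ((I₀.filter (fun p => !P1 p)).map Prod.fst).Nodup :=
        ((nodup_fst hch).sublist ((List.filter_sublist (l := I₀)).map Prod.fst))
      have h2 : lb = ((I₀.filter (fun p => !P1 p)).map Prod.fst).map (fun x => u + x) := by
        rw [hlb, List.map_map]; rfl
      rw [h2]
      exact h1.map (fun a b hab => by omega)
    set F : Finset ℕ := Finset.range (q - p₁)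
      ∪ Finset.Ico ((q - p₁) + (l-1)*q) ((q - p₁) + (l-1)*q + p₁) with hF
    have hcard : F.card ≤ q := by
      calc F.card ≤ (q - p₁) + (((q - p₁) + (l-1)*q + p₁) - ((q - p₁) + (l-1)*q)) := by
            rw [hF]
            refine (Finset.card_union_le _ _).trans ?_
            rw [Finset.card_range, Nat.card_Ico]
      _ ≤ q := by omega
    have hmemF : ∀ x ∈ lb, x ∈ F := by
      intro x hx
      rw [hlb] at hx
      obtain ⟨p, hp, rfl⟩ := List.mem_map.mp hx
      have hpI : p ∈ I₀ := List.mem_of_mem_filter hp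
      have hp1 : p.1 < D.length := (hval p hpI).1
      have hbadp := List.of_mem_filter hp
      simp only [Bool.not_eq_true', hP1, decide_eq_false_iff_not, not_and, not_lt] at hbadp
      rw [hF, Finset.mem_union, Finset.mem_range, Finset.mem_Ico]
      rcases Nat.lt_or_ge (u + p.1) (q - p₁) with h | h
      · left; exact h
      · right
        refine ⟨hbadp h, ?_⟩
        omega
    have := nodup_length_le_card lb hnd F hmemF
    omega
  have hbad2 : (I₀.filter (fun p => !P2 p)).length ≤ q := by
    set lb := (I₀.filter (fun p => !P2 p)).map (fun p : ℕ × ℕ => v + p.2) with hlb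
    have hlblen : lb.length = (I₀.filter (fun p => !P2 p)).length := by
      rw [hlb, List.length_map]
    have hnd : lb.Nodup := by
      have h1 : ((I₀.filter (fun p => !P2 p)).map Prod.snd).Nodup :=
        ((nodup_snd hch).sublist ((List.filter_sublist (l := I₀)).map Prod.snd))
      have h2 : lb = ((I₀.filter (fun p => !P2 p)).map Prod.snd).map (fun x => v + x) := by
        rw [hlb, List.map_map]; rfl
      rw [h2]
      exact h1.map (fun a b hab => by omega)
    set F : Finset ℕ := Finset.range (q - p₂)
      ∪ Finset.Ico ((q - p₂) + (l-1)*q) ((q - p₂) + (l-1)*q + p₂) with hF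
    have hcard : F.card ≤ q := by
      calc F.card ≤ (q - p₂) + (((q - p₂) + (l-1)*q + p₂) - ((q - p₂) + (l-1)*q)) := by
            rw [hF]
            refine (Finset.card_union_le _ _).trans ?_
            rw [Finset.card_range, Nat.card_Ico]
      _ ≤ q := by omega
    have hmemF : ∀ x ∈ lb, x ∈ F := by
      intro x hx
      rw [hlb] at hx
      obtain ⟨p, hp, rfl⟩ := List.mem_map.mp hx
      have hpI : p ∈ I₀ := List.mem_of_mem_filter hp
      have hp2 : p.2 < Db.length := (hval p hpI).2.1
      have hbadp := List.of_mem_filter hp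
      simp only [Bool.not_eq_true', hP2, decide_eq_false_iff_not, not_and, not_lt] at hbadp
      rw [hF, Finset.mem_union, Finset.mem_range, Finset.mem_Ico]
      rcases Nat.lt_or_ge (v + p.2) (q - p₂) with h | h
      · left; exact h
      · right
        refine ⟨hbadp h, ?_⟩
        omega
    have := nodup_length_le_card lb hnd F hmemF
    omega
  -- properties of the interior part
  have hsubI' : I' <+ I₀ := List.filter_sublist (l := I₀)
  have hchI' : I'.Chain' (fun p q => p.1 < q.1 ∧ p.2 < q.2) :=
    pairwise_chain2 ((chain2_pairwise hch).sublist hsubI')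
  have hmemI' : ∀ p ∈ I', p ∈ I₀ ∧
      (q - p₁ ≤ u + p.1 ∧ u + p.1 < (q - p₁) + (l-1)*q) ∧
      (q - p₂ ≤ v + p.2 ∧ v + p.2 < (q - p₂) + (l-1)*q) := by
    intro p hp
    have h1 : p ∈ I₀ := List.mem_of_mem_filter hp
    have h2 := List.of_mem_filter hp
    rw [hP] at h2
    simp only [Bool.and_eq_true, hP1, hP2, decide_eq_true_eq] at h2
    exact ⟨h1, h2.1, h2.2⟩
  -- pass to relative coordinates
  set f : ℕ × ℕ → ℕ × ℕ := fun p => (u + p.1 - (q - p₁), v + p.2 - (q - p₂)) with hf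
  set K := I'.map f with hK
  have hchK : K.Chain' (fun p q => p.1 < q.1 ∧ p.2 < q.2) := by
    refine pairwise_chain2 ?_
    rw [hK]
    refine List.pairwise_map.mpr ?_
    refine (chain2_pairwise hchI').imp_of_mem ?_
    intro p p' hp hp' hrel
    have h1 := (hmemI' p hp).2
    have h2 := (hmemI' p' hp').2
    rw [hf]
    constructor <;> simp only <;> omega
  have hmemK : ∀ r ∈ K, Bj[r.1 % q]? = Bk[r.2 % q]? := by
    intro r hr
    rw [hK] at hr
    obtain ⟨p, hp, rfl⟩ := List.mem_map.mp hr
    obtain ⟨hpI, hr1, hr2⟩ := hmemI' p hp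
    have h1 : p.1 < D.length := (hval p hpI).1
    have h2 : p.2 < Db.length := (hval p hpI).2.1
    have h3 : D[p.1]? = Db[p.2]? := (hval p hpI).2.2
    rw [hf]
    simp only
    rw [← hmid1 (u + p.1) hr1.1 hr1.2, ← hmid2 (v + p.2) hr2.1 hr2.2]
    rw [hget1 p.1 h1, hget2 p.2 h2]
    exact h3
  -- bound the interior part
  have hI'bound : (I'.length : ℝ) ≤ (1 - α) / 2 * ((D.length : ℝ) + Db.length)
      + ((D.length : ℝ) + Db.length) / R + 3 * q / R := by
    by_cases hKnil : K = []
    · have hnil : I' = [] := by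
        rw [hK] at hKnil
        exact List.map_eq_nil_iff.mp hKnil
      rw [hnil]
      simp only [List.length_nil, Nat.cast_zero]
      have t1 : (0:ℝ) ≤ (1 - α) / 2 * ((D.length : ℝ) + Db.length) := by
        apply mul_nonneg (by linarith) (by positivity)
      have t2 : (0:ℝ) ≤ ((D.length : ℝ) + Db.length) / R := by positivity
      have t3 : (0:ℝ) ≤ 3 * (q:ℝ) / R := by positivity
      linarith
    · set x := K.head hKnil with hxdef
      set y := K.getLast hKnil with hydef
      have hxh : K.head? = some x := List.head?_eq_head _
      have hyl : K.getLast? = some y := List.getLast?_eq_getLast _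
      have hQ := mainInd α hα1 q R hq hR Bj Bk hBj hBk hsep K.length K (le_refl _)
        hchK hmemK x y hxh hyl
      have hI'ne : I' ≠ [] := fun h => hKnil (by rw [hK, h]; rfl)
      set ph := I'.head hI'ne with hphdef
      set pl := I'.getLast hI'ne with hpldef
      have hphx : x = f ph := by
        have h1 : K.head? = some (f ph) := by
          rw [hK, List.head?_map, List.head?_eq_head hI'ne]; rfl
        rw [hxh] at h1
        exact Option.some.inj h1
      have hply : y = f pl := by
        have h1 : K.getLast? = some (f pl) := by
          rw [hK, List.getLast?_map, List.getLast?_eq_getLast hI'ne]; rfl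
        rw [hyl] at h1
        exact Option.some.inj h1
      have hphm := hmemI' ph (List.head_mem _)
      have hplm := hmemI' pl (List.getLast_mem _)
      have hph1 : ph.1 < D.length := (hval ph hphm.1).1
      have hph2 : ph.2 < Db.length := (hval ph hphm.1).2.1
      have hpl1 : pl.1 < D.length := (hval pl hplm.1).1
      have hpl2 : pl.2 < Db.length := (hval pl hplm.1).2.1
      have hx1 : x.1 + (q - p₁) = u + ph.1 := by
        rw [hphx, hf]; simp only
        have := hphm.2.1.1; omega
      have hx2 : x.2 + (q - p₂) = v + ph.2 := by
        rw [hphx, hf]; simp only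
        have := hphm.2.2.1; omega
      have hy1 : y.1 + (q - p₁) = u + pl.1 := by
        rw [hply, hf]; simp only
        have := hplm.2.1.1; omega
      have hy2 : y.2 + (q - p₂) = v + pl.2 := by
        rw [hply, hf]; simp only
        have := hplm.2.2.1; omega
      have hyK : y ∈ K := List.getLast_mem _
      have hxy := mem_bounds hchK hxh hyl y hyK
      have hxy1 : x.1 ≤ y.1 := hxy.1
      have hxy2 : x.2 ≤ y.2 := hxy.2.1
      -- span bounds
      have hspan1 : (y.1:ℝ) - x.1 + 1 ≤ (D.length : ℝ) := by
        have c1 : (x.1:ℝ) + ((q - p₁ : ℕ):ℝ) = (u:ℝ) + (ph.1:ℝ) := by exact_mod_cast hx1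
        have c2 : (y.1:ℝ) + ((q - p₁ : ℕ):ℝ) = (u:ℝ) + (pl.1:ℝ) := by exact_mod_cast hy1
        have c3 : (pl.1:ℝ) + 1 ≤ (D.length:ℝ) := by exact_mod_cast hpl1
        have c4 : (0:ℝ) ≤ (ph.1:ℝ) := by positivity
        linarith
      have hspan2 : (y.2:ℝ) - x.2 + 1 ≤ (Db.length : ℝ) := by
        have c1 : (x.2:ℝ) + ((q - p₂ : ℕ):ℝ) = (v:ℝ) + (ph.2:ℝ) := by exact_mod_cast hx2
        have c2 : (y.2:ℝ) + ((q - p₂ : ℕ):ℝ) = (v:ℝ) + (pl.2:ℝ) := by exact_mod_cast hy2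
        have c3 : (pl.2:ℝ) + 1 ≤ (Db.length:ℝ) := by exact_mod_cast hpl2
        have c4 : (0:ℝ) ≤ (ph.2:ℝ) := by positivity
        linarith
      -- div bounds
      have hdiv1 : ((y.1/q : ℕ):ℝ) - ((x.1/q : ℕ):ℝ) ≤ (D.length:ℝ)/q + 1 := by
        have hd : y.1 / q ≤ x.1 / q + (y.1 - x.1) / q + 1 :=
          div_le_div_add_sub_div_add_one hxy1
        have hsub : y.1 - x.1 ≤ D.length := by omega
        have hd2 : (y.1 - x.1)/q ≤ D.length / q := Nat.div_le_div_right hsub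
        have hc : ((D.length / q : ℕ):ℝ) ≤ (D.length:ℝ)/q := Nat.cast_div_le
        have hd3 : ((y.1/q :ℕ):ℝ) ≤ ((x.1/q:ℕ):ℝ) + ((D.length/q :ℕ):ℝ) + 1 := by
          exact_mod_cast hd.trans (by omega)
        linarith
      have hdiv2 : ((y.2/q : ℕ):ℝ) - ((x.2/q : ℕ):ℝ) ≤ (Db.length:ℝ)/q + 1 := by
        have hd : y.2 / q ≤ x.2 / q + (y.2 - x.2) / q + 1 :=
          div_le_div_add_sub_div_add_one hxy2
        have hsub : y.2 - x.2 ≤ Db.length := by omega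
        have hd2 : (y.2 - x.2)/q ≤ Db.length / q := Nat.div_le_div_right hsub
        have hc : ((Db.length / q : ℕ):ℝ) ≤ (Db.length:ℝ)/q := Nat.cast_div_le
        have hd3 : ((y.2/q :ℕ):ℝ) ≤ ((x.2/q:ℕ):ℝ) + ((Db.length/q :ℕ):ℝ) + 1 := by
          exact_mod_cast hd.trans (by omega)
        linarith
      have hKlenI' : K.length = I'.length := by rw [hK, List.length_map]
      have hmul1 : (1 - α)/2 * (((y.1:ℝ) - x.1 + 1) + ((y.2:ℝ) - x.2 + 1))
          ≤ (1 - α)/2 * ((D.length:ℝ) + Db.length) :=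
        mul_le_mul_of_nonneg_left (by linarith) (by linarith)
      have hmul2 : (q:ℝ)/R * ((((y.1/q : ℕ):ℝ) - ((x.1/q : ℕ):ℝ))
            + (((y.2/q : ℕ):ℝ) - ((x.2/q : ℕ):ℝ)) + 1)
          ≤ (q:ℝ)/R * ((D.length:ℝ)/q + 1 + ((Db.length:ℝ)/q + 1) + 1) :=
        mul_le_mul_of_nonneg_left (by linarith) (by positivity)
      have hmul3 : (q:ℝ)/R * ((D.length:ℝ)/q + 1 + ((Db.length:ℝ)/q + 1) + 1)
          = (D.length:ℝ)/R + (Db.length:ℝ)/R + 3*q/R := by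
        field_simp
        ring
      have hcastlen : (I'.length:ℝ) = (K.length:ℝ) := by exact_mod_cast hKlenI'.symm
      have hsplitR : ((D.length:ℝ) + Db.length)/R = (D.length:ℝ)/R + (Db.length:ℝ)/R := by
        ring
      rw [hcastlen]
      linarith
  -- total bound
  have hItot : I₀.length ≤ I'.length + q + q := by omega
  have htotal : (maxMatch D Db : ℝ) ≤ (1 - α)/2 * ((D.length:ℝ) + Db.length)
      + ((D.length:ℝ) + Db.length)/R + 3*q/R + 2*q := by
    have h1 : (I₀.length:ℝ) ≤ (I'.length:ℝ) + (q:ℝ) + q := by exact_mod_cast hItot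
    have h2 : (maxMatch D Db : ℝ) = (I₀.length : ℝ) := by exact_mod_cast hI₀len.symm
    linarith
  -- final arithmetic
  have key : 6*(q:ℝ)/R + 4*q < 4*R/l * ((D.length:ℝ) + Db.length) := by
    have h8 : 4*(R:ℝ)/l * (2*(q:ℝ)*l/R) = 8*q := by field_simp; ring
    have hge : 4*(R:ℝ)/l * (2*(q:ℝ)*l/R) ≤ 4*(R:ℝ)/l * ((D.length:ℝ)+Db.length) := by
      apply mul_le_mul_of_nonneg_left _ (by positivity)
      have e2 : 2*(q:ℝ)*l/R = (q:ℝ)*l/R + (q:ℝ)*l/R := by ring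
      linarith
    have h6 : 6*(q:ℝ)/R ≤ 3*q := by
      rw [div_le_iff₀ hRpos]; nlinarith
    linarith
  have h2M : 2*(maxMatch D Db : ℝ) < ((1-α) + 2/R + 4*R/l) * ((D.length:ℝ)+Db.length) := by
    have e : ((1-α) + 2/(R:ℝ) + 4*R/l) * ((D.length:ℝ)+Db.length)
        = 2 * ((1-α)/2 * ((D.length:ℝ) + Db.length))
          + 2 * (((D.length:ℝ) + Db.length)/R)
          + 4*(R:ℝ)/l * ((D.length:ℝ)+Db.length) := by ring
    rw [e]
    ring_nf at htotal key ⊢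
    linarith
  have hdiv : 2*(maxMatch D Db:ℝ)/((D.length:ℝ)+Db.length) < (1-α) + 2/R + 4*R/l := by
    rw [div_lt_iff₀ hnm]; linarith
  unfold fbar
  have e2 : 2*(maxMatch D Db:ℝ)/((D.length:ℝ)+Db.length)
      = 2*(maxMatch D Db:ℝ)/((D.length:ℝ)+Db.length) := rfl
  linarith
end
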